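/- arXiv:1905.12414 — 3 statements merged into one kernel-verified Lean document; each statement's English description precedes it below -/
import Mathlib

section
/- For all integers k ≥ 2 and n ≥ 6, the Gallai-Ramsey number of the wheel W_n satisfies: gr_k(K_3 : W_n) ≥ (3n − 4)·5^{(k−2)/2} + 1 if n is even and k is even; gr_k(K_3 : W_n) ≥ (6n − 8)·5^{(k−3)/2} + 1 if n is even and k is odd; gr_k(K_3 : W_n) ≥ (2n − 3)·5^{(k−2)/2} + 1 if n is odd and k is even; and gr_k(K_3 : W_n) ≥ (4n − 6)·5^{(k−3)/2} + 1 if n is odd and k is odd. -/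
open SimpleGraph

/-- The cone over a graph: join of `K₁` with `G`. The new vertex `none` is
adjacent to every vertex of `G`. -/
def coneGraph {V : Type*} (G : SimpleGraph V) : SimpleGraph (Option V) where
  Adj u v :=
    (u = none ∧ v ≠ none) ∨ (u ≠ none ∧ v = none) ∨
      (∃ a b, u = some a ∧ v = some b ∧ G.Adj a b)
  symm := by
    constructor
    rintro u v (⟨h1, h2⟩ | ⟨h1, h2⟩ | ⟨a, b, h1, h2, h3⟩)
    · exact Or.inr (Or.inl ⟨h2, h1⟩)
    · exact Or.inl ⟨h2, h1⟩
    · exact Or.inr (Or.inr ⟨b, a, h2, h1, h3.symm⟩)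
  loopless := by
    constructor
    rintro u (⟨h1, h2⟩ | ⟨h1, h2⟩ | ⟨a, b, h1, h2, h3⟩)
    · exact h2 h1
    · exact h1 h2
    · subst h1
      rw [Option.some_inj] at h2
      subst h2
      exact G.loopless.irrefl a h3

/-- The wheel graph `W_{m+1}`: a hub joined to every vertex of the cycle `C_m`. -/
def wheelGraph (m : ℕ) : SimpleGraph (Option (Fin m)) :=
  coneGraph (cycleGraph m)

/-- The fan graph `F_m = K₁ ∨ P_m`. -/
def fanGraph (m : ℕ) : SimpleGraph (Option (Fin m)) :=
  coneGraph (pathGraph m)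

/-- An edge-coloring `c` of the complete graph on `W` contains a monochromatic
copy of `H` in color `i`. -/
def HasMonoCopy {V W α : Type*} (c : Sym2 W → α) (H : SimpleGraph V) (i : α) : Prop :=
  ∃ f : V ↪ W, ∀ u v : V, H.Adj u v → c s(f u, f v) = i

/-- An edge-coloring `c` of the complete graph on `W` contains a rainbow triangle. -/
def HasRainbowTriangle {W α : Type*} (c : Sym2 W → α) : Prop :=
  ∃ x y z : W, x ≠ y ∧ y ≠ z ∧ x ≠ z ∧
    c s(x, y) ≠ c s(y, z) ∧ c s(y, z) ≠ c s(x, z) ∧ c s(x, y) ≠ c s(x, z)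

/-- An edge-coloring `c` of the complete graph on `W` contains a rainbow copy of `G`,
i.e. a copy of `G` all of whose edges receive pairwise distinct colors. -/
def HasRainbowCopy {V W α : Type*} (c : Sym2 W → α) (G : SimpleGraph V) : Prop :=
  ∃ f : V ↪ W, ∀ u v x y : V, G.Adj u v → G.Adj x y →
    c s(f u, f v) = c s(f x, f y) → s(u, v) = s(x, y)

/-- The two-color Ramsey number `R(G, H)`. -/
noncomputable def ramseyNumber {V₁ V₂ : Type*} (G : SimpleGraph V₁) (H : SimpleGraph V₂) : ℕ :=
  sInf {n : ℕ | ∀ c : Sym2 (Fin n) → Fin 2, HasMonoCopy c G 0 ∨ HasMonoCopy c H 1}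

/-- The `k`-color Ramsey number `R_k(H)`. -/
noncomputable def multicolorRamseyNumber {V : Type*} (k : ℕ) (H : SimpleGraph V) : ℕ :=
  sInf {n : ℕ | ∀ c : Sym2 (Fin n) → Fin k, ∃ i, HasMonoCopy c H i}

/-- The Gallai-Ramsey number `gr_k(K₃ : H)`. -/
noncomputable def gallaiRamseyK3 {V : Type*} (k : ℕ) (H : SimpleGraph V) : ℕ :=
  sInf {n : ℕ | ∀ c : Sym2 (Fin n) → Fin k,
    HasRainbowTriangle c ∨ ∃ i, HasMonoCopy c H i}

/-- The general Gallai-Ramsey number `gr_k(G : H)`. -/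
noncomputable def gallaiRamsey {V₁ V₂ : Type*} (k : ℕ) (G : SimpleGraph V₁)
    (H : SimpleGraph V₂) : ℕ :=
  sInf {n : ℕ | ∀ c : Sym2 (Fin n) → Fin k,
    HasRainbowCopy c G ∨ ∃ i, HasMonoCopy c H i}

/-! ### Auxiliary machinery for the lower bound -/


/-- iterated bound for the greedy Ramsey argument -/
def ramStep (k : ℕ) : ℕ → ℕ
  | 0 => 0
  | m + 1 => k * ramStep k m + 1

theorem prehom {N k : ℕ} (hk : 0 < k) (c : Sym2 (Fin N) → Fin k) :
    ∀ (m : ℕ) (S : Finset (Fin N)), ramStep k m ≤ S.card →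
      ∃ (x : Fin m → Fin N) (d : Fin m → Fin k), (∀ i, x i ∈ S) ∧
        Function.Injective x ∧ ∀ i j : Fin m, i < j → c s(x i, x j) = d i := by
  intro m
  induction m with
  | zero =>
    intro S _
    exact ⟨Fin.elim0, Fin.elim0, fun i => i.elim0, fun i => i.elim0, fun i => i.elim0⟩
  | succ m ih =>
    intro S hS
    have hSne : S.Nonempty := Finset.card_pos.mp (by simp [ramStep] at hS; omega)
    obtain ⟨a, ha⟩ := hSne
    set S' := S.erase a with hS'
    have hce : S'.card = S.card - 1 := Finset.card_erase_of_mem ha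
    have hcard : k * ramStep k m ≤ S'.card := by
      simp [ramStep] at hS
      omega
    have hmaps : ∀ y ∈ S', (fun y => c s(a, y)) y ∈ (Finset.univ : Finset (Fin k)) := by
      intro y _; exact Finset.mem_univ _
    have huniv : (Finset.univ : Finset (Fin k)).Nonempty := ⟨⟨0, hk⟩, Finset.mem_univ _⟩
    have hpig := Finset.exists_le_card_fiber_of_mul_le_card_of_maps_to hmaps huniv
      (by simpa [Finset.card_univ] using hcard)
    obtain ⟨t, _, ht⟩ := hpig
    set T := S'.filter (fun y => c s(a, y) = t) with hT
    obtain ⟨x', d', hxmem, hxinj, hcol⟩ := ih T ht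
    refine ⟨Fin.cons a x', Fin.cons t d', ?_, ?_, ?_⟩
    · intro i
      refine Fin.cases ?_ ?_ i
      · simpa using ha
      · intro j
        have := hxmem j
        simp only [Fin.cons_succ]
        exact Finset.mem_of_mem_erase (Finset.mem_of_mem_filter _ this)
    · rw [Fin.cons_injective_iff]
      refine ⟨?_, hxinj⟩
      rintro ⟨j, hj⟩
      have := hxmem j
      rw [hj] at this
      exact Finset.ne_of_mem_erase (Finset.mem_of_mem_filter _ this) rfl
    · intro i j hij
      refine Fin.cases ?_ ?_ i hij
      · intro hij
        obtain ⟨j', rfl⟩ := Fin.eq_succ_of_ne_zero (Fin.pos_iff_ne_zero.mp hij)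
        have := hxmem j'
        rw [hT, Finset.mem_filter] at this
        simpa using this.2
      · intro i' hij
        have hj0 : j ≠ 0 := by
          rintro rfl
          simp at hij
        obtain ⟨j', rfl⟩ := Fin.eq_succ_of_ne_zero hj0
        simp only [Fin.cons_succ]
        exact hcol i' j' (by simpa using hij)

theorem exists_mono_clique {k n : ℕ} (hk : 0 < k)
    (c : Sym2 (Fin (ramStep k (k * n + 1))) → Fin k) :
    ∃ (t : Fin k) (S : Finset (Fin (ramStep k (k * n + 1)))), n < S.card ∧
      ∀ u ∈ S, ∀ v ∈ S, u ≠ v → c s(u, v) = t := by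
  obtain ⟨x, d, _, hxinj, hcol⟩ := prehom hk c (k * n + 1) Finset.univ (by simp)
  have hmaps : ∀ i ∈ (Finset.univ : Finset (Fin (k * n + 1))), d i ∈ (Finset.univ : Finset (Fin k)) :=
    fun i _ => Finset.mem_univ _
  have hpig : ∃ b ∈ (Finset.univ : Finset (Fin k)), n <
      (Finset.univ.filter (fun i => d i = b)).card :=
    Finset.exists_lt_card_fiber_of_mul_lt_card_of_maps_to hmaps
      (by simp [Finset.card_univ])
  obtain ⟨t, _, ht⟩ := hpig
  set I := Finset.univ.filter (fun i => d i = t) with hI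
  refine ⟨t, I.image x, ?_, ?_⟩
  · rwa [Finset.card_image_of_injective _ hxinj]
  · intro u hu v hv huv
    simp only [Finset.mem_image, hI, Finset.mem_filter] at hu hv
    obtain ⟨i, ⟨_, hdi⟩, rfl⟩ := hu
    obtain ⟨j, ⟨_, hdj⟩, rfl⟩ := hv
    have hij : i ≠ j := fun h => huv (by rw [h])
    rcases lt_or_gt_of_ne hij with h | h
    · rw [hcol i j h, hdi]
    · rw [Sym2.eq_swap, hcol j i h, hdj]


/-! basic adjacency lemmas -/

theorem wheel_adj_hub {m : ℕ} (a : Fin m) : (wheelGraph m).Adj none (some a) :=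
  Or.inl ⟨rfl, by simp⟩

theorem wheel_adj_rim {m : ℕ} {a b : Fin m} (h : (cycleGraph m).Adj a b) :
    (wheelGraph m).Adj (some a) (some b) := Or.inr (Or.inr ⟨a, b, rfl, rfl, h⟩)

theorem cycle_adj_consec {m : ℕ} (hm : 2 ≤ m) (i : ℕ) (hi : i + 1 < m) :
    (cycleGraph m).Adj ⟨i, by omega⟩ ⟨i + 1, hi⟩ := by
  rw [cycleGraph_adj']
  right
  rw [Fin.sub_def]
  simp only []
  have h1 : m - i + (i + 1) = m + 1 := by omega
  rw [h1]
  rw [Nat.add_mod_left]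
  exact Nat.mod_eq_of_lt (by omega)

theorem cycle_adj_last {m : ℕ} (hm : 2 ≤ m) :
    (cycleGraph m).Adj ⟨m - 1, by omega⟩ ⟨0, by omega⟩ := by
  rw [cycleGraph_adj']
  right
  rw [Fin.sub_def]
  simp only []
  have h1 : m - (m - 1) + 0 = 1 := by omega
  rw [h1]
  exact Nat.mod_eq_of_lt (by omega)

theorem cycle_adj_01 {m : ℕ} (hm : 2 ≤ m) :
    (cycleGraph m).Adj ⟨0, by omega⟩ ⟨1, by omega⟩ :=
  cycle_adj_consec hm 0 (by omega)

/-! block decomposition -/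

def blockOf {B N : ℕ} (x : Fin (B * N)) : Fin B :=
  ⟨x.val / N, by
    have hx := x.isLt
    have hN : 0 < N := by
      rcases Nat.eq_zero_or_pos N with h | h
      · subst h; simp at hx
      · exact h
    exact (Nat.div_lt_iff_lt_mul hN).mpr hx⟩

def posOf {B N : ℕ} (x : Fin (B * N)) : Fin N :=
  ⟨x.val % N, by
    have hx := x.isLt
    have hN : 0 < N := by
      rcases Nat.eq_zero_or_pos N with h | h
      · subst h; simp at hx
      · exact h
    exact Nat.mod_lt _ hN⟩

theorem block_pos_inj {B N : ℕ} {x y : Fin (B * N)}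
    (hb : blockOf x = blockOf y) (hp : posOf x = posOf y) : x = y := by
  unfold blockOf at hb
  unfold posOf at hp
  rw [Fin.mk.injEq] at hb hp
  have e1 := Nat.div_add_mod x.val N
  have e2 := Nat.div_add_mod y.val N
  exact Fin.ext (by rw [← e1, ← e2, hb, hp])

/-! no proper colorings of the wheel -/

theorem no_proper_2 {m : ℕ} (hm : 2 ≤ m) (q : Option (Fin m) → Fin 2)
    (hq : ∀ u v, (wheelGraph m).Adj u v → q u ≠ q v) : False := by
  have h0 := hq none (some ⟨0, by omega⟩) (wheel_adj_hub _)
  have h1 := hq none (some ⟨1, by omega⟩) (wheel_adj_hub _)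
  have h01 := hq (some ⟨0, by omega⟩) (some ⟨1, by omega⟩) (wheel_adj_rim (cycle_adj_01 hm))
  have key : ∀ a b c : Fin 2, a ≠ b → b ≠ c → a ≠ c → False := by decide
  exact key _ _ _ h0 h01 h1

theorem no_proper_3 {m : ℕ} (hm : 5 ≤ m) (hmo : Odd m) (q : Option (Fin m) → Fin 3)
    (hq : ∀ u v, (wheelGraph m).Adj u v → q u ≠ q v) : False := by
  have hm2 : 2 ≤ m := by omega
  have key3 : ∀ a x y z : Fin 3, x = a ∨ y = a ∨ z = a ∨ x = y ∨ y = z ∨ x = z := by decide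
  have key : ∀ a x y z : Fin 3, x ≠ a → y ≠ a → z ≠ a → x ≠ y → y ≠ z → x = z := by
    intro a x y z h1 h2 h3 h4 h5
    rcases key3 a x y z with h | h | h | h | h | h <;>
      first | exact h | (exact absurd h (by assumption))
  have hhub : ∀ i : Fin m, q (some i) ≠ q none := fun i h =>
    hq none (some i) (wheel_adj_hub i) h.symm
  have adj2 : ∀ (a : ℕ) (hb : a + 1 < m),
      q (some ⟨a, by omega⟩) ≠ q (some ⟨a + 1, hb⟩) := by
    intro a hb
    exact hq _ _ (wheel_adj_rim (cycle_adj_consec hm2 a hb))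
  have even_eq : ∀ i : ℕ, ∀ h : 2 * i < m,
      q (some ⟨2 * i, h⟩) = q (some ⟨0, by omega⟩) := by
    intro i
    induction i with
    | zero => intro h; rfl
    | succ j ih =>
      intro h
      have h1 : 2 * j < m := by omega
      have h2 : 2 * j + 1 < m := by omega
      have e1 := adj2 (2 * j) h2
      have e2 : q (some ⟨2 * j + 1, h2⟩) ≠ q (some ⟨2 * (j + 1), h⟩) := adj2 (2 * j + 1) h
      have heq := (key (q none) _ _ _ (hhub _) (hhub _) (hhub _) e1 e2).symm
      rw [ih h1] at heq
      exact heq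
  obtain ⟨i, hi⟩ : ∃ i, m - 1 = 2 * i := by
    obtain ⟨r, hr⟩ := hmo
    exact ⟨r, by omega⟩
  have hlast := hq (some ⟨m - 1, by omega⟩) (some ⟨0, by omega⟩)
    (wheel_adj_rim (cycle_adj_last hm2))
  apply hlast
  have hcast : (⟨m - 1, by omega⟩ : Fin m) = ⟨2 * i, by omega⟩ := Fin.ext hi
  rw [hcast]
  exact even_eq i (by omega)

/-! generic blow-up construction -/

theorem castAdd_lt {k r : ℕ} (j : Fin k) : (Fin.castAdd r j).val < k := j.isLt
theorem natAdd_ge {k r : ℕ} (j : Fin r) : k ≤ (Fin.natAdd k j).val := Nat.le_add_right _ _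

def blowup {k r B N : ℕ} (g : Fin B → Fin B → Fin r) (hg : ∀ a b, g a b = g b a)
    (c : Sym2 (Fin N) → Fin k) : Sym2 (Fin (B * N)) → Fin (k + r) :=
  Sym2.lift ⟨fun x y =>
    if blockOf x = blockOf y then Fin.castAdd r (c s(posOf x, posOf y))
    else Fin.natAdd k (g (blockOf x) (blockOf y)), by
    intro x y
    dsimp only
    by_cases h : blockOf x = blockOf y
    · rw [if_pos h, if_pos h.symm, Sym2.eq_swap]
    · rw [if_neg h, if_neg (fun hh => h hh.symm), hg]⟩

theorem blowup_eq {k r B N : ℕ} (g : Fin B → Fin B → Fin r) (hg : ∀ a b, g a b = g b a)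
    (c : Sym2 (Fin N) → Fin k) (x y : Fin (B * N)) :
    blowup g hg c s(x, y) =
      if blockOf x = blockOf y then Fin.castAdd r (c s(posOf x, posOf y))
      else Fin.natAdd k (g (blockOf x) (blockOf y)) := rfl

theorem all_blocks_eq {B N m : ℕ} (f : Option (Fin m) → Fin (B * N))
    (hblk : ∀ a : Fin m, blockOf (f none) = blockOf (f (some a))) :
    ∀ u v, blockOf (f u) = blockOf (f v) := by
  have h : ∀ w, blockOf (f w) = blockOf (f none) := by
    rintro (_ | a)
    · rfl
    · exact (hblk a).symm
  intro u v
  rw [h u, h v]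

theorem blowup_good {k r B N m : ℕ} (hm : 2 ≤ m)
    (g : Fin B → Fin B → Fin r) (hg : ∀ a b, g a b = g b a)
    (hgrb : ∀ x y z : Fin B, g x y = g y z ∨ g y z = g x z ∨ g x y = g x z)
    (hgtri : ∀ x y z : Fin B, x ≠ y → y ≠ z → x ≠ z → g x y = g y z → g y z = g x z → False)
    (c : Sym2 (Fin N) → Fin k)
    (hr : ¬ HasRainbowTriangle c) (hmw : ∀ i, ¬ HasMonoCopy c (wheelGraph m) i) :
    ¬ HasRainbowTriangle (blowup g hg c) ∧
      ∀ i, ¬ HasMonoCopy (blowup g hg c) (wheelGraph m) i := by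
  constructor
  · rintro ⟨x, y, z, hxy, hyz, hxz, h4, h5, h6⟩
    simp only [blowup_eq] at h4 h5 h6
    by_cases bxy : blockOf x = blockOf y <;> by_cases byz : blockOf y = blockOf z <;>
        by_cases bxz : blockOf x = blockOf z <;>
      simp only [bxy, byz, bxz, if_true, if_false, if_pos, if_neg, not_false_iff] at h4 h5 h6
    · refine hr ⟨posOf x, posOf y, posOf z, ?_, ?_, ?_, ?_, ?_, ?_⟩
      · exact fun h => hxy (block_pos_inj bxy h)
      · exact fun h => hyz (block_pos_inj byz h)
      · exact fun h => hxz (block_pos_inj bxz h)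
      · exact fun h => h4 (congrArg _ h)
      · exact fun h => h5 (congrArg _ h)
      · exact fun h => h6 (congrArg _ h)
    · exact bxz (bxy.trans byz)
    · exact byz (bxy.symm.trans bxz)
    · exact h5 rfl
    · exact bxy (bxz.trans byz.symm)
    · exact h6 rfl
    · rw [if_neg (fun h => byz h.symm)] at h4
      exact h4 (congrArg _ (hg _ _))
    · rcases hgrb (blockOf x) (blockOf y) (blockOf z) with h | h | h
      · exact h4 (congrArg _ h)
      · exact h5 (congrArg _ h)
      · exact h6 (congrArg _ h)
  · rintro i ⟨f, hf⟩
    by_cases hik : i.val < k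
    · have hblk : ∀ a : Fin m, blockOf (f none) = blockOf (f (some a)) := by
        intro a
        have h := hf none (some a) (wheel_adj_hub a)
        rw [blowup_eq] at h
        by_contra hne
        rw [if_neg hne] at h
        have hv := congrArg Fin.val h
        have hge := natAdd_ge (k := k) (g (blockOf (f none)) (blockOf (f (some a))))
        omega
      have hall := all_blocks_eq (fun v => f v) hblk
      have hinj : Function.Injective (fun v => posOf (f v)) := by
        intro u v h
        exact f.injective (block_pos_inj (hall u v) h)
      refine hmw ⟨i.val, hik⟩ ⟨⟨fun v => posOf (f v), hinj⟩, ?_⟩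
      intro u v huv
      have h := hf u v huv
      rw [blowup_eq, if_pos (hall u v)] at h
      have hv := congrArg Fin.val h
      exact Fin.ext (by simpa using hv)
    · have h0m : (0 : ℕ) < m := by omega
      have h1m : (1 : ℕ) < m := by omega
      have e1 := hf none (some ⟨0, h0m⟩) (wheel_adj_hub _)
      have e2 := hf none (some ⟨1, h1m⟩) (wheel_adj_hub _)
      have e3 := hf (some ⟨0, h0m⟩) (some ⟨1, h1m⟩) (wheel_adj_rim (cycle_adj_01 hm))
      rw [blowup_eq] at e1 e2 e3
      have getb : ∀ x y : Fin (B * N),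
          (if blockOf x = blockOf y then Fin.castAdd r (c s(posOf x, posOf y))
            else Fin.natAdd k (g (blockOf x) (blockOf y))) = i →
          blockOf x ≠ blockOf y ∧ (g (blockOf x) (blockOf y)).val = i.val - k := by
        intro x y h
        by_cases hb : blockOf x = blockOf y
        · rw [if_pos hb] at h
          exact absurd (h ▸ castAdd_lt (c s(posOf x, posOf y))) hik
        · rw [if_neg hb] at h
          refine ⟨hb, ?_⟩
          have hv := congrArg Fin.val h
          simp [Fin.natAdd] at hv
          omega
      obtain ⟨b1, v1⟩ := getb _ _ e1
      obtain ⟨b2, v2⟩ := getb _ _ e2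
      obtain ⟨b3, v3⟩ := getb _ _ e3
      exact hgtri (blockOf (f none)) (blockOf (f (some ⟨0, h0m⟩))) (blockOf (f (some ⟨1, h1m⟩)))
        b1 b3 b2 (Fin.ext (by omega)) (Fin.ext (by omega))

/-! base colorings and steps -/

def GoodCol (k N m : ℕ) : Prop :=
  ∃ c : Sym2 (Fin N) → Fin k, ¬ HasRainbowTriangle c ∧ ∀ i, ¬ HasMonoCopy c (wheelGraph m) i

theorem no_rainbow_two {W : Type*} (c : Sym2 W → Fin 2) : ¬ HasRainbowTriangle c := by
  rintro ⟨x, y, z, _, _, _, h4, h5, h6⟩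
  have key : ∀ a b c : Fin 2, a ≠ b → b ≠ c → a ≠ c → False := by decide
  exact key _ _ _ h4 h5 h6

def baseColor (B N : ℕ) : Sym2 (Fin (B * N)) → Fin 2 :=
  Sym2.lift ⟨fun x y => if blockOf x = blockOf y then 1 else 0, by
    intro x y
    dsimp only
    by_cases h : blockOf x = blockOf y
    · rw [if_pos h, if_pos h.symm]
    · rw [if_neg h, if_neg (fun hh => h hh.symm)]⟩

theorem baseColor_eq {B N : ℕ} (x y : Fin (B * N)) :
    baseColor B N s(x, y) = if blockOf x = blockOf y then 1 else 0 := rfl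

theorem base_no_mono {B m : ℕ} (hm : 2 ≤ m)
    (hnp : ∀ q : Option (Fin m) → Fin B, (∀ u v, (wheelGraph m).Adj u v → q u ≠ q v) → False) :
    ∀ i, ¬ HasMonoCopy (baseColor B m) (wheelGraph m) i := by
  rintro i ⟨f, hf⟩
  fin_cases i
  · apply hnp (fun v => blockOf (f v))
    intro u v huv h
    have hc := hf u v huv
    rw [baseColor_eq, if_pos h] at hc
    exact one_ne_zero hc
  · have hblk : ∀ a : Fin m, blockOf (f none) = blockOf (f (some a)) := by
      intro a
      have h := hf none (some a) (wheel_adj_hub a)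
      rw [baseColor_eq] at h
      by_contra hne
      rw [if_neg hne] at h
      exact zero_ne_one h
    have hall := all_blocks_eq (fun v => f v) hblk
    have hinj : Function.Injective (fun v : Option (Fin m) => posOf (f v)) := fun u v h =>
      f.injective (block_pos_inj (hall u v) h)
    have hcard := Fintype.card_le_of_injective _ hinj
    simp at hcard

theorem base_good_odd (m : ℕ) (hm : 2 ≤ m) : GoodCol 2 (2 * m) m :=
  ⟨baseColor 2 m, no_rainbow_two _, base_no_mono hm (fun q hq => no_proper_2 hm q hq)⟩

theorem base_good_even (m : ℕ) (hm : 5 ≤ m) (hmo : Odd m) : GoodCol 2 (3 * m) m :=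
  ⟨baseColor 3 m, no_rainbow_two _, base_no_mono (by omega)
    (fun q hq => no_proper_3 hm hmo q hq)⟩

theorem step_two {k N m : ℕ} (hm : 2 ≤ m) (h : GoodCol k N m) : GoodCol (k + 1) (2 * N) m := by
  obtain ⟨c, hr, hmw⟩ := h
  have key2 : ∀ x y z : Fin 2, x ≠ y → y ≠ z → x ≠ z → False := by decide
  have hb := blowup_good hm (fun _ _ => (0 : Fin 1)) (fun _ _ => rfl)
    (fun _ _ _ => Or.inl rfl) (fun x y z h1 h2 h3 _ _ => key2 x y z h1 h2 h3) c hr hmw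
  exact ⟨blowup _ _ c, hb.1, hb.2⟩

def pent (x y : Fin 5) : Fin 2 :=
  if (x.val + 1) % 5 = y.val ∨ (y.val + 1) % 5 = x.val then 0 else 1

theorem pent_symm : ∀ x y, pent x y = pent y x := by decide
theorem pent_tri : ∀ x y z : Fin 5,
    x = y ∨ y = z ∨ x = z ∨ ¬(pent x y = pent y z ∧ pent y z = pent x z) := by decide
theorem two_choice : ∀ a b c : Fin 2, a = b ∨ b = c ∨ a = c := by decide

theorem step_five {k N m : ℕ} (hm : 2 ≤ m) (h : GoodCol k N m) : GoodCol (k + 2) (5 * N) m := by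
  obtain ⟨c, hr, hmw⟩ := h
  have hb := blowup_good hm pent pent_symm (fun x y z => two_choice _ _ _)
    (fun x y z h1 h2 h3 e1 e2 => by
      rcases pent_tri x y z with h | h | h | h
      exacts [absurd h h1, absurd h h2, absurd h h3, h ⟨e1, e2⟩]) c hr hmw
  exact ⟨blowup pent pent_symm c, hb.1, hb.2⟩

theorem good_iter {k N m : ℕ} (hm : 2 ≤ m) (h : GoodCol k N m) :
    ∀ j, GoodCol (k + 2 * j) (N * 5 ^ j) m := by
  intro j
  induction j with
  | zero => simpa using h
  | succ i ih =>
    have hs := step_five hm ih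
    have e1 : k + 2 * (i + 1) = k + 2 * i + 2 := by omega
    have e2 : N * 5 ^ (i + 1) = 5 * (N * 5 ^ i) := by ring
    rw [e1, e2]
    exact hs

theorem grSet_mem (k n : ℕ) (hk : 0 < k) (hn : 0 < n) :
    (ramStep k (k * n + 1)) ∈ {N : ℕ | ∀ c : Sym2 (Fin N) → Fin k,
      HasRainbowTriangle c ∨ ∃ i, HasMonoCopy c (wheelGraph (n - 1)) i} := by
  intro c
  right
  obtain ⟨t, S, hcard, hmono⟩ := exists_mono_clique hk c
  have hle : Fintype.card (Option (Fin (n - 1))) ≤ Fintype.card {x // x ∈ S} := by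
    simp [Fintype.card_coe]
    omega
  obtain ⟨e⟩ := Function.Embedding.nonempty_of_card_le hle
  refine ⟨t, ⟨fun v => (e v : Fin _), fun u v huv => by
    have : e u = e v := Subtype.ext huv
    exact e.injective this⟩, ?_⟩
  intro u v huv
  exact hmono _ (e u).2 _ (e v).2 (fun h => huv.ne (e.injective (Subtype.ext h)))

theorem lower_of_good {k n N : ℕ} (hk : 0 < k) (hn : 0 < n)
    (c : Sym2 (Fin N) → Fin k) (hr : ¬ HasRainbowTriangle c)
    (hm : ∀ i, ¬ HasMonoCopy c (wheelGraph (n - 1)) i) :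
    N + 1 ≤ gallaiRamseyK3 k (wheelGraph (n - 1)) := by
  rw [gallaiRamseyK3]
  by_contra hcon
  push_neg at hcon
  have hne : {M : ℕ | ∀ c : Sym2 (Fin M) → Fin k,
      HasRainbowTriangle c ∨ ∃ i, HasMonoCopy c (wheelGraph (n - 1)) i}.Nonempty :=
    ⟨_, grSet_mem k n hk hn⟩
  have hmem := Nat.sInf_mem hne
  set M := sInf {M : ℕ | ∀ c : Sym2 (Fin M) → Fin k,
      HasRainbowTriangle c ∨ ∃ i, HasMonoCopy c (wheelGraph (n - 1)) i} with hM
  have hMN : M ≤ N := by omega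
  set e := Fin.castLEEmb hMN with he
  set c' : Sym2 (Fin M) → Fin k := fun p => c (p.map e) with hc'
  have hcc : ∀ x y : Fin M, c' s(x, y) = c s(e x, e y) := by
    intro x y; rw [hc']; simp [Sym2.map_pair_eq]
  rcases hmem c' with hrb | ⟨i, f, hf⟩
  · obtain ⟨x, y, z, h1, h2, h3, h4, h5, h6⟩ := hrb
    exact hr ⟨e x, e y, e z, fun h => h1 (e.injective h), fun h => h2 (e.injective h),
      fun h => h3 (e.injective h), by rw [← hcc, ← hcc]; exact h4,
      by rw [← hcc, ← hcc]; exact h5, by rw [← hcc, ← hcc]; exact h6⟩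
  · exact hm i ⟨f.trans e, fun u v huv => by
      have := hf u v huv
      rw [hcc] at this
      exact this⟩

/-- For all integers `k ≥ 2` and `n ≥ 6`, lower bounds on `gr_k(K₃ : W_n)`
according to the parities of `n` and `k`. -/
theorem gallaiRamsey_wheel_lower (k n : ℕ) (hk : 2 ≤ k) (hn : 6 ≤ n) :
    (Even n → Even k →
      (3 * n - 4) * 5 ^ ((k - 2) / 2) + 1 ≤ gallaiRamseyK3 k (wheelGraph (n - 1))) ∧
    (Even n → Odd k →
      (6 * n - 8) * 5 ^ ((k - 3) / 2) + 1 ≤ gallaiRamseyK3 k (wheelGraph (n - 1))) ∧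
    (Odd n → Even k →
      (2 * n - 3) * 5 ^ ((k - 2) / 2) + 1 ≤ gallaiRamseyK3 k (wheelGraph (n - 1))) ∧
    (Odd n → Odd k →
      (4 * n - 6) * 5 ^ ((k - 3) / 2) + 1 ≤ gallaiRamseyK3 k (wheelGraph (n - 1))) := by
  have hk0 : 0 < k := by omega
  have hn0 : 0 < n := by omega
  have hm2 : 2 ≤ n - 1 := by omega
  refine ⟨?_, ?_, ?_, ?_⟩
  · intro hne hke
    set j := (k - 2) / 2 with hj
    have hkj : k = 2 + 2 * j := by obtain ⟨t, ht⟩ := hke; omega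
    have hodd : Odd (n - 1) := by obtain ⟨t, ht⟩ := hne; exact ⟨t - 1, by omega⟩
    have hg := good_iter hm2 (base_good_even (n - 1) (by omega) hodd) j
    rw [← hkj] at hg
    obtain ⟨c, hrc, hmc⟩ := hg
    have hlb := lower_of_good (n := n) hk0 hn0 c hrc hmc
    calc (3 * n - 4) * 5 ^ j + 1 ≤ 3 * (n - 1) * 5 ^ j + 1 :=
          Nat.add_le_add_right (Nat.mul_le_mul_right _ (by omega)) 1
      _ ≤ _ := hlb
  · intro hne hko
    set j := (k - 3) / 2 with hj
    have hkj : k = 3 + 2 * j := by obtain ⟨t, ht⟩ := hko; omega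
    have hodd : Odd (n - 1) := by obtain ⟨t, ht⟩ := hne; exact ⟨t - 1, by omega⟩
    have hg := good_iter hm2 (step_two hm2 (base_good_even (n - 1) (by omega) hodd)) j
    rw [← hkj] at hg
    obtain ⟨c, hrc, hmc⟩ := hg
    have hlb := lower_of_good (n := n) hk0 hn0 c hrc hmc
    calc (6 * n - 8) * 5 ^ j + 1 ≤ 2 * (3 * (n - 1)) * 5 ^ j + 1 :=
          Nat.add_le_add_right (Nat.mul_le_mul_right _ (by omega)) 1
      _ ≤ _ := hlb
  · intro hno hke
    set j := (k - 2) / 2 with hj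
    have hkj : k = 2 + 2 * j := by obtain ⟨t, ht⟩ := hke; omega
    have hg := good_iter hm2 (base_good_odd (n - 1) hm2) j
    rw [← hkj] at hg
    obtain ⟨c, hrc, hmc⟩ := hg
    have hlb := lower_of_good (n := n) hk0 hn0 c hrc hmc
    calc (2 * n - 3) * 5 ^ j + 1 ≤ 2 * (n - 1) * 5 ^ j + 1 :=
          Nat.add_le_add_right (Nat.mul_le_mul_right _ (by omega)) 1
      _ ≤ _ := hlb
  · intro hno hko
    set j := (k - 3) / 2 with hj
    have hkj : k = 3 + 2 * j := by obtain ⟨t, ht⟩ := hko; omega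
    have hg := good_iter hm2 (step_two hm2 (base_good_odd (n - 1) hm2)) j
    rw [← hkj] at hg
    obtain ⟨c, hrc, hmc⟩ := hg
    have hlb := lower_of_good (n := n) hk0 hn0 c hrc hmc
    calc (4 * n - 6) * 5 ^ j + 1 ≤ 2 * (2 * (n - 1)) * 5 ^ j + 1 :=
          Nat.add_le_add_right (Nat.mul_le_mul_right _ (by omega)) 1
      _ ≤ _ := hlb
end

section
/- In any edge coloring of a finite complete graph on at least two vertices that contains no rainbow triangle, there exists a partition of the vertex set into at least two nonempty parts such that at most two colors in total appear on the edges joining distinct parts, and for each pair of distinct parts all edges between that pair of parts have the same single color. -/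
open SimpleGraph

universe u v

private def GConc {α : Type v} {V : Type u} [Fintype V] [DecidableEq V] (c : Sym2 V → α) : Prop :=
  ∃ P : Finpartition (Finset.univ : Finset V), 2 ≤ P.parts.card ∧
    (∃ c₁ c₂ : α, ∀ p ∈ P.parts, ∀ q ∈ P.parts, p ≠ q →
      ∀ u ∈ p, ∀ v ∈ q, c s(u, v) = c₁ ∨ c s(u, v) = c₂) ∧
    (∀ p ∈ P.parts, ∀ q ∈ P.parts, p ≠ q →
      ∃ a : α, ∀ u ∈ p, ∀ v ∈ q, c s(u, v) = a)

section GallaiProof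
variable {α : Type v}

open Finset in
private lemma module_step {V : Type u} [Fintype V] [DecidableEq V] (c : Sym2 V → α)
    (hc : ¬ HasRainbowTriangle c) (M : Finset V) (hM2 : 2 ≤ M.card) (hMu : M ≠ Finset.univ)
    (hmod : ∀ x ∉ M, ∃ a, ∀ y ∈ M, c s(x, y) = a)
    (IH : ∀ {W : Type u} [Fintype W] [DecidableEq W] (c' : Sym2 W → α),
      Fintype.card W < Fintype.card V → 2 ≤ Fintype.card W → ¬ HasRainbowTriangle c' →
      GConc c') :
    GConc c := by
  classical
  obtain ⟨m₀, hm₀⟩ : M.Nonempty := Finset.card_pos.mp (by omega)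
  set W := Option {x : V // x ∉ M} with hW
  set emb : W → V := fun w => Option.elim w m₀ Subtype.val with hembdef
  set blk : W → Finset V := fun w => Option.elim w M (fun x => {x.val}) with hblkdef
  have hembblk : ∀ w, emb w ∈ blk w := by rintro (_ | x) <;> simp [hembdef, hblkdef, hm₀]
  have hblkuniq : ∀ w w' (u : V), u ∈ blk w → u ∈ blk w' → w = w' := by
    rintro (_ | x) (_ | y) u hu hu' <;> simp only [hblkdef, Option.elim, Finset.mem_singleton] at hu hu'
    · rfl
    · exact absurd hu (hu' ▸ y.2)
    · exact absurd hu' (hu ▸ x.2)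
    · rw [hu] at hu'; exact congrArg some (Subtype.ext hu')
  set c' : Sym2 W → α := fun e => c (Sym2.map emb e) with hc'def
  have hc'pair : ∀ w w', c' s(w, w') = c s(emb w, emb w') := by
    intro w w'; simp [hc'def]
  have hinj : Function.Injective emb := by
    rintro (_ | x) (_ | y) h <;> simp [hembdef] at h ⊢
    · exact absurd (h ▸ hm₀) y.2
    · exact absurd (h ▸ hm₀) x.2
    · exact congrArg some (Subtype.ext h)
  have hc' : ¬ HasRainbowTriangle c' := by
    rintro ⟨x, y, z, h1, h2, h3, h4, h5, h6⟩
    exact hc ⟨emb x, emb y, emb z, fun h => h1 (hinj h), fun h => h2 (hinj h),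
      fun h => h3 (hinj h), by simpa [hc'pair] using h4, by simpa [hc'pair] using h5,
      by simpa [hc'pair] using h6⟩
  have hMlt : M.card < Fintype.card V := by
    have := Finset.card_lt_card (Finset.ssubset_univ_iff.mpr hMu)
    simpa using this
  have hcardW : Fintype.card W = Fintype.card V - M.card + 1 := by
    have h1 : Fintype.card W = Fintype.card {x : V // x ∉ M} + 1 := Fintype.card_option
    have h2 : Fintype.card {x : V // x ∉ M} = Mᶜ.card := by
      rw [Fintype.card_subtype]; congr 1; ext x; simp
    rw [h1, h2, Finset.card_compl]
  have hWlt : Fintype.card W < Fintype.card V := by omega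
  have hW2 : 2 ≤ Fintype.card W := by omega
  obtain ⟨Pb, hPb2, ⟨c₁, c₂, hPbcol⟩, hPbmono⟩ := IH c' hWlt hW2 hc'
  have hcross : ∀ w w', w ≠ w' → ∀ u ∈ blk w, ∀ z ∈ blk w', c s(u, z) = c' s(w, w') := by
    rintro (_ | x) (_ | y) hne u hu z hz
    · exact absurd rfl hne
    · simp only [hblkdef, Option.elim] at hu hz
      obtain ⟨a, ha⟩ := hmod y.val y.2
      have e1 := ha u hu
      have e2 := ha m₀ hm₀
      rw [hc'pair]
      simp only [hembdef, Option.elim]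
      have hz' : z = y.val := Finset.mem_singleton.mp hz
      subst hz'
      calc c s(u, ↑y) = a := by rw [Sym2.eq_swap]; exact e1
        _ = c s(m₀, ↑y) := by rw [Sym2.eq_swap (a := m₀)]; exact e2.symm
    · simp only [hblkdef, Option.elim] at hu hz
      obtain ⟨a, ha⟩ := hmod x.val x.2
      have e1 := ha z hz
      have e2 := ha m₀ hm₀
      rw [hc'pair]
      simp only [hembdef, Option.elim]
      have hu' : u = x.val := Finset.mem_singleton.mp hu
      subst hu'
      rw [e1]
      exact e2.symm
    · simp only [hblkdef, Option.elim, Finset.mem_singleton] at hu hz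
      rw [hc'pair, hu, hz]
      simp [hembdef]
  set U : Finset W → Finset V := fun π => π.biUnion blk with hUdef
  have hmemU : ∀ (π : Finset W) (x : V), x ∈ U π ↔ ∃ w ∈ π, x ∈ blk w := by
    intro π x; simp [hUdef]
  have hUdisj : ∀ π ∈ Pb.parts, ∀ π' ∈ Pb.parts, π ≠ π' → Disjoint (U π) (U π') := by
    intro π hπ π' hπ' hne
    rw [Finset.disjoint_left]
    intro u hu hu'
    obtain ⟨w, hwπ, hw⟩ := (hmemU π u).mp hu
    obtain ⟨w', hwπ', hw'⟩ := (hmemU π' u).mp hu'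
    have := hblkuniq w w' u hw hw'
    subst this
    exact Finset.disjoint_left.mp (Pb.disjoint (Finset.mem_coe.mpr hπ) (Finset.mem_coe.mpr hπ') hne) hwπ hwπ'
  have hUinj : Set.InjOn U ↑Pb.parts := by
    intro π hπ π' hπ' hU
    by_contra hne
    obtain ⟨w, hw⟩ := Pb.nonempty_of_mem_parts (Finset.mem_coe.mp hπ)
    have h1 : emb w ∈ U π := (hmemU π _).mpr ⟨w, hw, hembblk w⟩
    have h2 : emb w ∈ U π' := hU ▸ h1
    exact Finset.disjoint_left.mp (hUdisj π (Finset.mem_coe.mp hπ) π' (Finset.mem_coe.mp hπ') hne) h1 h2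
  refine ⟨⟨Pb.parts.image U, ?_, ?_, ?_⟩, ?_, ?_, ?_⟩
  · rw [Finset.supIndep_iff_pairwiseDisjoint]
    intro s hs t ht hst
    obtain ⟨π, hπ, rfl⟩ := Finset.mem_image.mp (Finset.mem_coe.mp hs)
    obtain ⟨π', hπ', rfl⟩ := Finset.mem_image.mp (Finset.mem_coe.mp ht)
    exact hUdisj π hπ π' hπ' (fun h => hst (by rw [h]))
  · apply le_antisymm (Finset.sup_le fun p _ => le_top)
    intro x _
    rw [Finset.mem_sup]
    by_cases hx : x ∈ M
    · obtain ⟨π, hπ, hwπ⟩ := Pb.exists_mem (Finset.mem_univ (none : W))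
      exact ⟨U π, Finset.mem_image_of_mem U hπ, (hmemU π x).mpr ⟨none, hwπ, hx⟩⟩
    · obtain ⟨π, hπ, hwπ⟩ := Pb.exists_mem (Finset.mem_univ (some ⟨x, hx⟩ : W))
      exact ⟨U π, Finset.mem_image_of_mem U hπ,
        (hmemU π x).mpr ⟨some ⟨x, hx⟩, hwπ, by simp [hblkdef]⟩⟩
  · intro hbot
    obtain ⟨π, hπ, hUπ⟩ := Finset.mem_image.mp hbot
    obtain ⟨w, hw⟩ := Pb.nonempty_of_mem_parts hπ
    have : emb w ∈ U π := (hmemU π _).mpr ⟨w, hw, hembblk w⟩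
    rw [hUπ] at this
    simp at this
  · rw [Finset.card_image_of_injOn hUinj]; exact hPb2
  · refine ⟨c₁, c₂, ?_⟩
    intro p hp q hq hpq u hu z hz
    obtain ⟨π, hπ, rfl⟩ := Finset.mem_image.mp hp
    obtain ⟨π', hπ', rfl⟩ := Finset.mem_image.mp hq
    have hne : π ≠ π' := fun h => hpq (by rw [h])
    obtain ⟨w, hwπ, hw⟩ := (hmemU π u).mp hu
    obtain ⟨w', hwπ', hw'⟩ := (hmemU π' z).mp hz
    have hww' : w ≠ w' := by
      intro h
      subst h
      exact Finset.disjoint_left.mp (hUdisj π hπ π' hπ' hne)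
        ((hmemU π z).mpr ⟨w, hwπ, hw'⟩) hz
    rw [hcross w w' hww' u hw z hw']
    exact hPbcol π hπ π' hπ' hne w hwπ w' hwπ'
  · intro p hp q hq hpq
    obtain ⟨π, hπ, rfl⟩ := Finset.mem_image.mp hp
    obtain ⟨π', hπ', rfl⟩ := Finset.mem_image.mp hq
    have hne : π ≠ π' := fun h => hpq (by rw [h])
    obtain ⟨a, ha⟩ := hPbmono π hπ π' hπ' hne
    refine ⟨a, ?_⟩
    intro u hu z hz
    obtain ⟨w, hwπ, hw⟩ := (hmemU π u).mp hu
    obtain ⟨w', hwπ', hw'⟩ := (hmemU π' z).mp hz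
    have hww' : w ≠ w' := by
      intro h
      subst h
      exact Finset.disjoint_left.mp (hUdisj π hπ π' hπ' hne)
        ((hmemU π z).mpr ⟨w, hwπ, hw'⟩) hz
    rw [hcross w w' hww' u hw z hw']
    exact ha w hwπ w' hwπ'

open Finset in
private lemma key_module {V : Type u} [Fintype V] [DecidableEq V] (c : Sym2 V → α)
    (hc : ¬ HasRainbowTriangle c) (h2 : 2 ≤ Fintype.card V)
    (h3 : ¬ ∃ c₁ c₂ : α, ∀ u v : V, u ≠ v → c s(u, v) = c₁ ∨ c s(u, v) = c₂)
    (IH : ∀ {W : Type u} [Fintype W] [DecidableEq W] (c' : Sym2 W → α),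
      Fintype.card W < Fintype.card V → 2 ≤ Fintype.card W → ¬ HasRainbowTriangle c' →
      GConc c') :
    ∃ M : Finset V, 2 ≤ M.card ∧ M ≠ Finset.univ ∧ ∀ x ∉ M, ∃ a, ∀ y ∈ M, c s(x, y) = a := by
  classical
  by_contra hM
  set R : Set α → V → V → Prop := fun S a b => a ≠ b ∧ c s(a, b) ∈ S with hRdef
  have hRsymm : ∀ S : Set α, Symmetric (R S) := by
    intro S a b hab
    exact ⟨hab.1.symm, by rw [Sym2.eq_swap]; exact hab.2⟩
  have reach_all : ∀ (S : Set α) (u w : V), u ≠ w → c s(u, w) ∈ S → ∀ z,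
      Relation.ReflTransGen (R S) u z := by
    intro S u w huw hS
    set C : Finset V := Finset.univ.filter (fun z => Relation.ReflTransGen (R S) u z) with hCdef
    have hmemC : ∀ z, z ∈ C ↔ Relation.ReflTransGen (R S) u z := by
      intro z; simp [hCdef]
    by_cases hCu : C = Finset.univ
    · intro z
      exact (hmemC z).mp (by rw [hCu]; exact Finset.mem_univ z)
    · exfalso
      apply hM
      refine ⟨C, ?_, hCu, ?_⟩
      · exact Finset.one_lt_card.mpr ⟨u, (hmemC u).mpr Relation.ReflTransGen.refl,
          w, (hmemC w).mpr (Relation.ReflTransGen.single ⟨huw, hS⟩), huw⟩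
      · intro x hx
        have hxu : ∀ y, y ∈ C → y ≠ x := fun y hy h => hx (h ▸ hy)
        have hnotS : ∀ y ∈ C, c s(x, y) ∉ S := by
          intro y hy hmem
          exact hx ((hmemC x).mpr (((hmemC y).mp hy).tail
            ⟨hxu y hy, by rw [Sym2.eq_swap]; exact hmem⟩))
        have hconst : ∀ z, Relation.ReflTransGen (R S) u z → c s(x, z) = c s(x, u) := by
          intro z hz
          induction hz with
          | refl => rfl
          | @tail m k hm hmk ih =>
            have hmC : m ∈ C := (hmemC m).mpr hm
            have hkC : k ∈ C := (hmemC k).mpr (hm.tail hmk)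
            have hxm : x ≠ m := (hxu m hmC).symm
            have hxk : x ≠ k := (hxu k hkC).symm
            have hstep : c s(x, m) = c s(x, k) := by
              by_contra hne
              exact hc ⟨x, m, k, hxm, hmk.1, hxk,
                fun h => hnotS m hmC (by rw [h]; exact hmk.2),
                fun h => hnotS k hkC (by rw [← h]; exact hmk.2), hne⟩
            rw [← hstep]
            exact ih
        exact ⟨c s(x, u), fun y hy => hconst y ((hmemC y).mp hy)⟩
  -- three pairwise distinct colors
  obtain ⟨u₀, v₀, h00⟩ := Fintype.exists_pair_of_one_lt_card h2
  push_neg at h3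
  obtain ⟨u₁, v₁, h11, hA1, hA1'⟩ := h3 (c s(u₀, v₀)) (c s(u₀, v₀))
  obtain ⟨u₂, v₂, h22, hB1, hB2⟩ := h3 (c s(u₀, v₀)) (c s(u₁, v₁))
  have h3card : 3 ≤ Fintype.card V := by
    by_contra hlt
    have hc2 : Fintype.card V = 2 := by omega
    have huniv : ({u₀, v₀} : Finset V) = Finset.univ := by
      apply Finset.eq_of_subset_of_card_le (Finset.subset_univ _)
      rw [Finset.card_univ, hc2, Finset.card_insert_of_notMem (by simpa using h00),
        Finset.card_singleton]
    have hall : ∀ z : V, z = u₀ ∨ z = v₀ := by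
      intro z
      have hz : z ∈ ({u₀, v₀} : Finset V) := by rw [huniv]; exact Finset.mem_univ z
      simpa using hz
    have hs : s(u₁, v₁) = s(u₀, v₀) := by
      rcases hall u₁ with h1 | h1 <;> rcases hall v₁ with hh2 | hh2 <;> subst h1 <;> subst hh2
      · exact absurd rfl h11
      · rfl
      · exact Sym2.eq_swap
      · exact absurd rfl h11
    exact hA1 (by rw [hs])
  set vtx := u₀ with hvtxdef
  set c' : Sym2 {z : V // z ≠ vtx} → α := fun e => c (Sym2.map Subtype.val e) with hc'def
  have hc'pair : ∀ u w : {z : V // z ≠ vtx}, c' s(u, w) = c s(u.val, w.val) := by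
    intro u w; simp [hc'def]
  have hcardV' : Fintype.card {z : V // z ≠ vtx} = Fintype.card V - 1 := by
    rw [Fintype.card_subtype]
    rw [Finset.filter_ne']
    rw [Finset.card_erase_of_mem (Finset.mem_univ _), Finset.card_univ]
  have hc'rb : ¬ HasRainbowTriangle c' := by
    rintro ⟨x, y, z, hh1, hh2, hh3, hh4, hh5, hh6⟩
    exact hc ⟨x.val, y.val, z.val, fun h => hh1 (Subtype.ext h), fun h => hh2 (Subtype.ext h),
      fun h => hh3 (Subtype.ext h), by simpa [hc'pair] using hh4, by simpa [hc'pair] using hh5,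
      by simpa [hc'pair] using hh6⟩
  obtain ⟨P', hP'2, ⟨c₁, c₂, hcol⟩, hmono⟩ := IH c' (by omega) (by omega) hc'rb
  have hcover : ∀ z : {z : V // z ≠ vtx}, ∃ p ∈ P'.parts, z ∈ p :=
    fun z => P'.exists_mem (Finset.mem_univ z)
  have hdisj : ∀ p ∈ P'.parts, ∀ q ∈ P'.parts, p ≠ q →
      ∀ z : {z : V // z ≠ vtx}, z ∈ p → z ∈ q → False := by
    intro p hp q hq hne z hzp hzq
    exact Finset.disjoint_left.mp
      (P'.disjoint (Finset.mem_coe.mpr hp) (Finset.mem_coe.mpr hq) hne) hzp hzq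
  by_cases hD : ∃ p₀ ∈ P'.parts, ∃ r : α,
      ∀ q ∈ P'.parts, q ≠ p₀ → ∀ u' ∈ p₀, ∀ w' ∈ q, c' s(u', w') = r
  · obtain ⟨p₀, hp₀, r, hr⟩ := hD
    set A : Finset V := p₀.image Subtype.val with hAdef
    set B : Finset V := Finset.univ \ insert vtx A with hBdef
    have hAv : ∀ u ∈ A, u ≠ vtx := by
      intro u hu
      obtain ⟨u', _, rfl⟩ := Finset.mem_image.mp hu
      exact u'.2
    have hBv : vtx ∉ B := by simp [hBdef]
    have hABd : ∀ u, u ∈ A → u ∈ B → False := by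
      intro u huA huB
      rw [hBdef, Finset.mem_sdiff, Finset.mem_insert] at huB
      exact huB.2 (Or.inr huA)
    have hall' : ∀ z : V, z ≠ vtx → z ∉ A → z ∈ B := by
      intro z hz1 hz2
      rw [hBdef, Finset.mem_sdiff, Finset.mem_insert]
      exact ⟨Finset.mem_univ z, fun h => h.elim hz1 hz2⟩
    have hABr : ∀ u ∈ A, ∀ w ∈ B, c s(u, w) = r := by
      intro u hu w hw
      obtain ⟨u', hu', rfl⟩ := Finset.mem_image.mp hu
      have hwv : w ≠ vtx := by intro h; subst h; exact hBv hw
      have hwA : w ∉ A := fun h => hABd w h hw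
      obtain ⟨q, hq, hwq⟩ := hcover ⟨w, hwv⟩
      have hqp : q ≠ p₀ := by
        intro h; subst h
        exact hwA (Finset.mem_image.mpr ⟨⟨w, hwv⟩, hwq, rfl⟩)
      have := hr q hq hqp u' hu' ⟨w, hwv⟩ hwq
      rw [hc'pair] at this
      exact this
    have hAne : A.Nonempty := (P'.nonempty_of_mem_parts hp₀).image _
    have hBne : B.Nonempty := by
      obtain ⟨q, hq, hqne⟩ := Finset.exists_mem_ne hP'2 p₀
      obtain ⟨w', hw'⟩ := P'.nonempty_of_mem_parts hq
      refine ⟨w'.val, hall' w'.val w'.2 ?_⟩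
      intro hmem
      obtain ⟨z', hz', he⟩ := Finset.mem_image.mp hmem
      have hzw : z' = w' := Subtype.ext he
      subst hzw
      exact hdisj q hq p₀ hp₀ hqne z' hw' hz'
    obtain ⟨a, ha⟩ := hAne
    obtain ⟨b, hb⟩ := hBne
    have claim : ∀ (y : α), y ≠ r → ∀ (s t : V), s ≠ t → c s(s, t) = y →
        (∃ a' ∈ A, c s(vtx, a') = y) ∧ (∃ b' ∈ B, c s(vtx, b') = y) := by
      intro y hyr s t hst hcy
      have hreach := reach_all {y} s t hst (by rw [hcy]; exact rfl)
      haveI : Std.Symm (R {y}) := ⟨fun a b h => hRsymm {y} h⟩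
      have hsym : Symmetric (Relation.ReflTransGen (R {y})) := fun a b h => Std.Symm.symm a b h
      have hreach2 : ∀ z z' : V, Relation.ReflTransGen (R {y}) z z' := by
        intro z z'
        exact (hsym (hreach z)).trans (hreach z')
      have claimA : ∀ z, Relation.ReflTransGen (R {y}) a z →
          z ∈ A ∨ ∃ a' ∈ A, c s(vtx, a') = y := by
        intro z hz
        induction hz with
        | refl => exact Or.inl ha
        | @tail m k hm hmk ih =>
          rcases ih with hmA | hdone
          · rcases eq_or_ne k vtx with rfl | hkv
            · refine Or.inr ⟨m, hmA, ?_⟩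
              rw [Sym2.eq_swap]
              exact Set.mem_singleton_iff.mp hmk.2
            · by_cases hkA : k ∈ A
              · exact Or.inl hkA
              · exfalso
                have hkB : k ∈ B := hall' k hkv hkA
                have hry : r = y := by
                  rw [← hABr m hmA k hkB]
                  exact Set.mem_singleton_iff.mp hmk.2
                exact hyr hry.symm
          · exact Or.inr hdone
      have claimB : ∀ z, Relation.ReflTransGen (R {y}) b z →
          z ∈ B ∨ ∃ b' ∈ B, c s(vtx, b') = y := by
        intro z hz
        induction hz with
        | refl => exact Or.inl hb
        | @tail m k hm hmk ih =>
          rcases ih with hmB | hdone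
          · rcases eq_or_ne k vtx with rfl | hkv
            · refine Or.inr ⟨m, hmB, ?_⟩
              rw [Sym2.eq_swap]
              exact Set.mem_singleton_iff.mp hmk.2
            · by_cases hkB : k ∈ B
              · exact Or.inl hkB
              · exfalso
                have hkA : k ∈ A := by
                  by_contra hkA
                  exact hkB (hall' k hkv hkA)
                have hry : r = y := by
                  rw [← hABr k hkA m hmB]
                  rw [Sym2.eq_swap]
                  exact Set.mem_singleton_iff.mp hmk.2
                exact hyr hry.symm
          · exact Or.inr hdone
      constructor
      · rcases claimA b (hreach2 a b) with hbA | hdone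
        · exact absurd hbA (fun h => hABd b h hb)
        · exact hdone
      · rcases claimB a (hreach2 b a) with haB | hdone
        · exact absurd haB (fun h => hABd a ha h)
        · exact hdone
    obtain ⟨y₁, s₁, t₁, hst₁, hcy₁, hy₁r, y₂, s₂, t₂, hst₂, hcy₂, hy₂r, h12⟩ :
        ∃ y₁ s₁ t₁, s₁ ≠ t₁ ∧ c s(s₁, t₁) = y₁ ∧ y₁ ≠ r ∧
          ∃ y₂ s₂ t₂, s₂ ≠ t₂ ∧ c s(s₂, t₂) = y₂ ∧ y₂ ≠ r ∧ y₁ ≠ y₂ := by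
      rcases eq_or_ne (c s(u₀, v₀)) r with h | h
      · exact ⟨_, u₁, v₁, h11, rfl, fun hh => hA1 (hh.trans h.symm), _, u₂, v₂, h22, rfl,
          fun hh => hB1 (hh.trans h.symm), fun hh => hB2 hh.symm⟩
      · rcases eq_or_ne (c s(u₁, v₁)) r with h' | h'
        · exact ⟨_, u₀, v₀, h00, rfl, h, _, u₂, v₂, h22, rfl,
            fun hh => hB2 (hh.trans h'.symm), fun hh => hB1 hh.symm⟩
        · exact ⟨_, u₀, v₀, h00, rfl, h, _, u₁, v₁, h11, rfl, h', fun hh => hA1 hh.symm⟩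
    obtain ⟨⟨a₁, ha₁, hva₁⟩, -⟩ := claim y₁ hy₁r s₁ t₁ hst₁ hcy₁
    obtain ⟨-, ⟨b₂, hb₂, hvb₂⟩⟩ := claim y₂ hy₂r s₂ t₂ hst₂ hcy₂
    exact hc ⟨vtx, a₁, b₂, (hAv a₁ ha₁).symm, fun h => hABd a₁ ha₁ (h ▸ hb₂),
      fun h => hBv (h ▸ hb₂),
      by rw [hva₁, hABr a₁ ha₁ b₂ hb₂]; exact hy₁r,
      by rw [hABr a₁ ha₁ b₂ hb₂, hvb₂]; exact fun hh => hy₂r hh.symm,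
      by rw [hva₁, hvb₂]; exact h12⟩
  · push_neg at hD
    have hboth : ∀ p ∈ P'.parts, (c₁ ≠ c₂) ∧
        (∃ q ∈ P'.parts, q ≠ p ∧ ∀ u' ∈ p, ∀ w' ∈ q, c' s(u', w') = c₂) ∧
        (∃ q ∈ P'.parts, q ≠ p ∧ ∀ u' ∈ p, ∀ w' ∈ q, c' s(u', w') = c₁) := by
      intro p hp
      obtain ⟨q, hq, hqne, u', hu', w', hw', hne1⟩ := hD p hp c₁
      obtain ⟨a', ha'⟩ := hmono p hp q hq hqne.symm
      have h1 := ha' u' hu' w' hw'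
      have hcc := hcol p hp q hq hqne.symm u' hu' w' hw'
      have hac : a' = c₂ := by
        rcases hcc with hh | hh
        · exact absurd hh hne1
        · exact h1.symm.trans hh
      have h12 : c₁ ≠ c₂ := by
        intro h
        apply hne1
        rw [h1, hac, h]
      obtain ⟨q2, hq2, hq2ne, u2', hu2', w2', hw2', hne2⟩ := hD p hp c₂
      obtain ⟨a2, ha2⟩ := hmono p hp q2 hq2 hq2ne.symm
      have h21 := ha2 u2' hu2' w2' hw2'
      have hcc2 := hcol p hp q2 hq2 hq2ne.symm u2' hu2' w2' hw2'
      have hac2 : a2 = c₁ := by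
        rcases hcc2 with hh | hh
        · exact h21.symm.trans hh
        · exact absurd hh hne2
      refine ⟨h12, ⟨q, hq, hqne, ?_⟩, ⟨q2, hq2, hq2ne, ?_⟩⟩
      · intro x hx y hy; rw [ha' x hx y hy, hac]
      · intro x hx y hy; rw [ha2 x hx y hy, hac2]
    obtain ⟨X, sX, tX, hstX, hcX, hX1, hX2⟩ :
        ∃ X sX tX, sX ≠ tX ∧ c s(sX, tX) = X ∧ X ≠ c₁ ∧ X ≠ c₂ := by
      by_cases e0 : c s(u₀, v₀) ≠ c₁ ∧ c s(u₀, v₀) ≠ c₂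
      · exact ⟨_, u₀, v₀, h00, rfl, e0.1, e0.2⟩
      · by_cases e1 : c s(u₁, v₁) ≠ c₁ ∧ c s(u₁, v₁) ≠ c₂
        · exact ⟨_, u₁, v₁, h11, rfl, e1.1, e1.2⟩
        · push_neg at e0 e1
          refine ⟨_, u₂, v₂, h22, rfl, ?_, ?_⟩
          · rcases eq_or_ne (c s(u₀, v₀)) c₁ with hh | hh
            · -- a₀ = c₁, so X₁ = c₂ (since X₁ ≠ a₀ = c₁)
              intro hX
              exact hB1 (hX.trans hh.symm)
            · -- a₀ = c₂, X₁ = c₁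
              have ha₀ : c s(u₀, v₀) = c₂ := e0 hh
              have hX₁ : c s(u₁, v₁) = c₁ := by
                rcases eq_or_ne (c s(u₁, v₁)) c₁ with hh' | hh'
                · exact hh'
                · exact absurd ((e1 hh').trans ha₀.symm) hA1
              intro hX
              exact hB2 (hX.trans hX₁.symm)
          · rcases eq_or_ne (c s(u₀, v₀)) c₂ with hh | hh
            · intro hX
              exact hB1 (hX.trans hh.symm)
            · have ha₀ : c s(u₀, v₀) = c₁ := by
                rcases eq_or_ne (c s(u₀, v₀)) c₁ with hh' | hh'
                · exact hh'
                · exact absurd (e0 hh') hh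
              have hX₁ : c s(u₁, v₁) = c₂ := by
                rcases eq_or_ne (c s(u₁, v₁)) c₁ with hh' | hh'
                · exact absurd (hh'.trans ha₀.symm) hA1
                · exact e1 hh'
              intro hX
              exact hB2 (hX.trans hX₁.symm)
    have claimI : ∀ p ∈ P'.parts, ∃ w' ∈ p, c s(vtx, (w' : {z : V // z ≠ vtx}).val) = X := by
      intro p hp
      obtain ⟨q, hq, hqne⟩ := Finset.exists_mem_ne hP'2 p
      obtain ⟨a', ha'⟩ := P'.nonempty_of_mem_parts hp
      obtain ⟨b', hb'⟩ := P'.nonempty_of_mem_parts hq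
      have hreach := reach_all {X} sX tX hstX (by rw [hcX]; exact rfl)
      haveI : Std.Symm (R {X}) := ⟨fun a b h => hRsymm {X} h⟩
      have hsym : Symmetric (Relation.ReflTransGen (R {X})) := fun a b h => Std.Symm.symm a b h
      have hreach2 : Relation.ReflTransGen (R {X}) a'.val b'.val :=
        (hsym (hreach a'.val)).trans (hreach b'.val)
      have claim' : ∀ z, Relation.ReflTransGen (R {X}) a'.val z →
          (∃ z' ∈ p, z = (z' : {z : V // z ≠ vtx}).val) ∨
            ∃ w' ∈ p, c s(vtx, (w' : {z : V // z ≠ vtx}).val) = X := by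
        intro z hz
        induction hz with
        | refl => exact Or.inl ⟨a', ha', rfl⟩
        | @tail m k hm hmk ih =>
          rcases ih with ⟨m', hm', rfl⟩ | hdone
          · rcases eq_or_ne k vtx with rfl | hkv
            · refine Or.inr ⟨m', hm', ?_⟩
              rw [Sym2.eq_swap]
              exact Set.mem_singleton_iff.mp hmk.2
            · obtain ⟨q'', hq'', hkq⟩ := hcover ⟨k, hkv⟩
              by_cases hq''p : q'' = p
              · subst hq''p; exact Or.inl ⟨⟨k, hkv⟩, hkq, rfl⟩
              · exfalso
                have hcolk := hcol p hp q'' hq'' (fun h => hq''p h.symm) m' hm' ⟨k, hkv⟩ hkq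
                rw [hc'pair] at hcolk
                have hX : c s(m'.val, k) = X := Set.mem_singleton_iff.mp hmk.2
                rcases hcolk with h | h
                · exact hX1 (hX.symm.trans h)
                · exact hX2 (hX.symm.trans h)
          · exact Or.inr hdone
      rcases claim' b'.val hreach2 with ⟨z', hz', hzz⟩ | hdone
      · exfalso
        have : b' = z' := Subtype.ext hzz
        subst this
        exact hdisj p hp q hq (fun h => hqne h.symm) b' hz' hb'
      · exact hdone
    have claimII : ∀ z : {z : V // z ≠ vtx}, c s(vtx, z.val) = X := by
      intro z
      obtain ⟨p, hp, hzp⟩ := hcover z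
      obtain ⟨h12, ⟨q, hq, hqne, hq2⟩, ⟨q', hq', hq'ne, hq1⟩⟩ := hboth p hp
      obtain ⟨w₁, hw₁, hvw₁⟩ := claimI q hq
      obtain ⟨w₂, hw₂, hvw₂⟩ := claimI q' hq'
      have e1 : c s(z.val, w₁.val) = c₂ := by
        have := hq2 z hzp w₁ hw₁; rw [hc'pair] at this; exact this
      have e2 : c s(z.val, w₂.val) = c₁ := by
        have := hq1 z hzp w₂ hw₂; rw [hc'pair] at this; exact this
      have hzw₁ : z.val ≠ w₁.val := by
        intro h
        exact hdisj p hp q hq hqne.symm z hzp (by rw [Subtype.ext h]; exact hw₁)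
      have hzw₂ : z.val ≠ w₂.val := by
        intro h
        exact hdisj p hp q' hq' hq'ne.symm z hzp (by rw [Subtype.ext h]; exact hw₂)
      have d1 : c s(vtx, z.val) = X ∨ c s(vtx, z.val) = c₂ := by
        by_contra hcon
        push_neg at hcon
        refine hc ⟨z.val, vtx, w₁.val, z.2, Ne.symm w₁.2, hzw₁, ?_, ?_, ?_⟩
        · rw [Sym2.eq_swap (a := z.val) (b := vtx), hvw₁]
          exact hcon.1
        · rw [hvw₁, e1]
          exact hX2
        · rw [Sym2.eq_swap (a := z.val) (b := vtx), e1]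
          exact hcon.2
      have d2 : c s(vtx, z.val) = X ∨ c s(vtx, z.val) = c₁ := by
        by_contra hcon
        push_neg at hcon
        refine hc ⟨z.val, vtx, w₂.val, z.2, Ne.symm w₂.2, hzw₂, ?_, ?_, ?_⟩
        · rw [Sym2.eq_swap (a := z.val) (b := vtx), hvw₂]
          exact hcon.1
        · rw [hvw₂, e2]
          exact hX1
        · rw [Sym2.eq_swap (a := z.val) (b := vtx), e2]
          exact hcon.2
      rcases d1 with h | h
      · exact h
      · rcases d2 with h' | h'
        · exact h'
        · exact absurd (h'.symm.trans h) h12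
    obtain ⟨p, hp⟩ : P'.parts.Nonempty := Finset.card_pos.mp (by omega)
    obtain ⟨h12, -, ⟨q', hq', hq'ne, hq1⟩⟩ := hboth p hp
    obtain ⟨u', hu'⟩ := P'.nonempty_of_mem_parts hp
    obtain ⟨w', hw'⟩ := P'.nonempty_of_mem_parts hq'
    have hedge : c s(u'.val, w'.val) = c₁ := by
      have := hq1 u' hu' w' hw'; rw [hc'pair] at this; exact this
    have huw : u'.val ≠ w'.val := by
      intro h
      exact hdisj p hp q' hq' hq'ne.symm u' hu' (by rw [Subtype.ext h]; exact hw')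
    have hrv := reach_all {c₁} u'.val w'.val huw (by rw [hedge]; exact rfl) vtx
    rcases Relation.ReflTransGen.cases_tail hrv with h | ⟨m, -, hmv⟩
    · exact u'.2 h.symm
    · have hXm : c s(vtx, m) = X := claimII ⟨m, hmv.1⟩
      have h2' : c s(m, vtx) = c₁ := Set.mem_singleton_iff.mp hmv.2
      rw [Sym2.eq_swap] at h2'
      exact hX1 (hXm.symm.trans h2')

private lemma gallai_aux : ∀ (n : ℕ) {V : Type u} [Fintype V] [DecidableEq V] (c : Sym2 V → α),
    Fintype.card V = n → 2 ≤ Fintype.card V → ¬ HasRainbowTriangle c → GConc c := by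
  intro n
  induction n using Nat.strong_induction_on with
  | _ n IH =>
    intro V _ _ c hn h2 hc
    by_cases h3 : ∃ c₁ c₂ : α, ∀ u v : V, u ≠ v → c s(u, v) = c₁ ∨ c s(u, v) = c₂
    · obtain ⟨c₁, c₂, hcc⟩ := h3
      have hsingle : ∀ p ∈ (⊥ : Finpartition (Finset.univ : Finset V)).parts, ∃ a : V, p = {a} := by
        intro p hp
        rw [Finpartition.parts_bot] at hp
        obtain ⟨a, -, ha⟩ := Finset.mem_map.mp hp
        exact ⟨a, ha.symm⟩
      refine ⟨⊥, ?_, ⟨c₁, c₂, ?_⟩, ?_⟩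
      · rw [Finpartition.card_bot, Finset.card_univ]; exact h2
      · intro p hp q hq hpq u hu w hw
        obtain ⟨a, rfl⟩ := hsingle p hp
        obtain ⟨b, rfl⟩ := hsingle q hq
        rw [Finset.mem_singleton] at hu hw
        subst hu; subst hw
        exact hcc u w (fun h => hpq (by rw [h]))
      · intro p hp q hq hpq
        obtain ⟨a, rfl⟩ := hsingle p hp
        obtain ⟨b, rfl⟩ := hsingle q hq
        refine ⟨c s(a, b), ?_⟩
        intro u hu w hw
        rw [Finset.mem_singleton] at hu hw
        subst hu; subst hw
        rfl
    · have IH' : ∀ {W : Type u} [Fintype W] [DecidableEq W] (c' : Sym2 W → α),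
          Fintype.card W < Fintype.card V → 2 ≤ Fintype.card W → ¬ HasRainbowTriangle c' →
          GConc c' := by
        intro W _ _ c' hlt h2' hc'
        exact IH (Fintype.card W) (hn ▸ hlt) c' rfl h2' hc'
      obtain ⟨M, hM2, hMu, hmod⟩ := key_module c hc h2 h3 IH'
      exact module_step c hc M hM2 hMu hmod IH'


end GallaiProof

/-- In any edge coloring of a finite complete graph on at least two vertices
with no rainbow triangle, there is a partition of the vertex set into at least two
(nonempty) parts such that at most two colors appear on edges between distinct parts and,
between each pair of distinct parts, all edges have a single color. -/
theorem gallai_partition {V α : Type*} [Fintype V] [DecidableEq V]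
    (hV : 2 ≤ Fintype.card V) (c : Sym2 V → α) (hc : ¬ HasRainbowTriangle c) :
    ∃ P : Finpartition (Finset.univ : Finset V), 2 ≤ P.parts.card ∧
      (∃ c₁ c₂ : α, ∀ p ∈ P.parts, ∀ q ∈ P.parts, p ≠ q →
        ∀ u ∈ p, ∀ v ∈ q, c s(u, v) = c₁ ∨ c s(u, v) = c₂) ∧
      (∀ p ∈ P.parts, ∀ q ∈ P.parts, p ≠ q →
        ∃ a : α, ∀ u ∈ p, ∀ v ∈ q, c s(u, v) = a) :=
  gallai_aux (Fintype.card V) c rfl hV hc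
end

section
/- Let G be a graph of order n ≥ 3 with minimum degree δ(G) ≥ (n + 1)/2. Then G is vertex pancyclic; that is, every vertex of G is contained in a cycle of length k for every k with 3 ≤ k ≤ n. -/
open SimpleGraph

private lemma mod_shift_inj {Q z a b : ℕ} (ha : a < Q) (hb : b < Q)
    (h : (z + a) % Q = (z + b) % Q) : a = b := by
  have h1 : a ≡ b [MOD Q] := Nat.ModEq.add_left_cancel' z h
  exact h1.eq_of_lt_of_lt ha hb

private lemma exists_walk_enum {V : Type*} (G : SimpleGraph V) (f : ℕ → V) (a : ℕ) :
    ∀ l : ℕ, (∀ j, j < l → G.Adj (f (a + j)) (f (a + j + 1))) →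
    ∃ P : G.Walk (f a) (f (a + l)), P.length = l ∧
      P.support = (List.range (l + 1)).map (fun j => f (a + j))
  | 0, _ => ⟨Walk.nil, by simp, by simp [List.range_succ]⟩
  | (l+1), hadj => by
    obtain ⟨P, hlen, hsup⟩ := exists_walk_enum G f a l (fun j hj => hadj j (by omega))
    refine ⟨P.concat (hadj l (by omega)), by simp [Walk.length_concat, hlen], ?_⟩
    rw [Walk.support_concat, hsup]
    simp [List.range_succ]

private lemma common_neighbor {W : Type*} [Fintype W] (H : SimpleGraph W) [DecidableRel H.Adj]
    (hd : Fintype.card W ≤ 2 * H.minDegree) {x y : W} (hxy : x ≠ y) (hnadj : ¬ H.Adj x y) :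
    ∃ c, H.Adj x c ∧ H.Adj y c := by
  classical
  by_contra hc
  push_neg at hc
  have hW2 : 2 ≤ Fintype.card W := Fintype.one_lt_card_iff.mpr ⟨x, y, hxy⟩
  have hdisj : Disjoint (H.neighborFinset x) (H.neighborFinset y) := by
    rw [Finset.disjoint_left]
    intro c hcx hcy
    exact hc c (by simpa using hcx) (by simpa using hcy)
  have hsub : H.neighborFinset x ∪ H.neighborFinset y ⊆ (Finset.univ.erase x).erase y := by
    intro c hcmem
    have hcx : c ≠ x ∧ c ≠ y := by
      rcases Finset.mem_union.mp hcmem with hcx | hcy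
      · rw [mem_neighborFinset] at hcx
        exact ⟨hcx.ne', fun e => hnadj (e ▸ hcx)⟩
      · rw [mem_neighborFinset] at hcy
        exact ⟨fun e => hnadj (e ▸ hcy).symm, hcy.ne'⟩
    exact Finset.mem_erase.mpr ⟨hcx.2, Finset.mem_erase.mpr ⟨hcx.1, Finset.mem_univ _⟩⟩
  have hcard : (H.neighborFinset x ∪ H.neighborFinset y).card ≤ Fintype.card W - 2 := by
    have h1 := Finset.card_le_card hsub
    have h2 : ((Finset.univ.erase x).erase y).card = Fintype.card W - 2 := by
      rw [Finset.card_erase_of_mem, Finset.card_erase_of_mem (Finset.mem_univ x)]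
      · simp; omega
      · exact Finset.mem_erase.mpr ⟨hxy.symm, Finset.mem_univ y⟩
    omega
  rw [Finset.card_union_of_disjoint hdisj] at hcard
  have hx' : H.minDegree ≤ (H.neighborFinset x).card := by
    rw [card_neighborFinset_eq_degree]; exact H.minDegree_le_degree x
  have hy' : H.minDegree ≤ (H.neighborFinset y).card := by
    rw [card_neighborFinset_eq_degree]; exact H.minDegree_le_degree y
  omega

private lemma dirac_cycle {W : Type*} [Fintype W] (H : SimpleGraph W)
    [DecidableRel H.Adj] (hm : 3 ≤ Fintype.card W)
    (hd : Fintype.card W ≤ 2 * H.minDegree) :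
    ∃ h : ℕ → W,
      (∀ j k, j < Fintype.card W → k < Fintype.card W → h j = h k → j = k) ∧
      (∀ j, j + 1 < Fintype.card W → H.Adj (h j) (h (j + 1))) ∧
      H.Adj (h (Fintype.card W - 1)) (h 0) ∧
      (∀ w : W, ∃ j, j < Fintype.card W ∧ h j = w) := by
  classical
  set m := Fintype.card W with hm'
  set A : ℕ → Prop := fun p => ∃ g : ℕ → W,
    (∀ j k, j ≤ p → k ≤ p → g j = g k → j = k) ∧ ∀ j, j < p → H.Adj (g j) (g (j + 1)) with hA
  have hbound : ∀ p, A p → p + 1 ≤ m := by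
    rintro p ⟨g, hinj, -⟩
    have hinj' : Function.Injective (fun j : Fin (p + 1) => g j) := by
      rintro ⟨j, hj⟩ ⟨k, hk⟩ e
      exact Fin.ext (hinj j k (by omega) (by omega) e)
    simpa using Fintype.card_le_of_injective _ hinj'
  haveI : Nonempty W := Fintype.card_pos_iff.mp (by omega)
  obtain ⟨w0⟩ := ‹Nonempty W›
  have hA0 : A 0 := ⟨fun _ => w0, fun j k hj hk _ => by omega, fun j hj => by omega⟩
  set p := Nat.findGreatest A m with hp'
  have hAp : A p := Nat.findGreatest_spec (Nat.zero_le m) hA0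
  have hmax : ∀ q, A q → q ≤ p := fun q hq =>
    Nat.le_findGreatest (by have := hbound q hq; omega) hq
  obtain ⟨g, ginj, gadj⟩ := hAp
  have hp1 : p + 1 ≤ m := hbound p ⟨g, ginj, gadj⟩
  -- closure at the two ends
  have hclosed0 : ∀ x, H.Adj (g 0) x → ∃ j, j ≤ p ∧ x = g j := by
    intro x hx
    by_contra hcon
    push_neg at hcon
    have hnew : A (p + 1) := by
      refine ⟨fun j => if j = 0 then x else g (j - 1), ?_, ?_⟩
      · intro j k hj hk e
        by_cases hj0 : j = 0 <;> by_cases hk0 : k = 0 <;> simp [hj0, hk0] at e ⊢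
        · exact absurd e (hcon (k - 1) (by omega))
        · exact absurd e.symm (hcon (j - 1) (by omega))
        · have := ginj (j - 1) (k - 1) (by omega) (by omega) e; omega
      · intro j hj
        by_cases hj0 : j = 0
        · simpa [hj0] using hx.symm
        · have h1 : j - 1 + 1 = j := by omega
          simpa [hj0, h1] using gadj (j - 1) (by omega)
    have := hmax _ hnew; omega
  have hclosedp : ∀ x, H.Adj (g p) x → ∃ j, j ≤ p ∧ x = g j := by
    intro x hx
    by_contra hcon
    push_neg at hcon
    have hnew : A (p + 1) := by
      refine ⟨fun j => if j ≤ p then g j else x, ?_, ?_⟩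
      · intro j k hj hk e
        by_cases hjp : j ≤ p <;> by_cases hkp : k ≤ p <;> simp [hjp, hkp] at e ⊢
        · exact ginj j k hjp hkp e
        · exact absurd e.symm (hcon j hjp)
        · exact absurd e (hcon k hkp)
        · omega
      · intro j hj
        by_cases hjp : j + 1 ≤ p
        · have e1 : j ≤ p := by omega
          simp only [if_pos e1, if_pos hjp]
          exact gadj j (by omega)
        · have hjp' : j = p := by omega
          subst hjp'
          simp only [if_pos (le_refl p), if_neg (show ¬ (p + 1 ≤ p) by omega)]
          exact hx
    have := hmax _ hnew; omega
  -- the two endpoint-neighbour index sets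
  set S : Finset ℕ := (Finset.range p).filter (fun j => H.Adj (g 0) (g (j + 1))) with hS
  set T : Finset ℕ := (Finset.range p).filter (fun j => H.Adj (g p) (g j)) with hT
  have hScard : S.card = H.degree (g 0) := by
    rw [← card_neighborFinset_eq_degree]
    apply Finset.card_bij (fun j _ => g (j + 1))
    · intro j hj
      rw [mem_neighborFinset]
      exact (Finset.mem_filter.mp hj).2
    · intro j hj k hk e
      have hj' := Finset.mem_range.mp (Finset.mem_filter.mp hj).1
      have hk' := Finset.mem_range.mp (Finset.mem_filter.mp hk).1
      have := ginj (j + 1) (k + 1) (by omega) (by omega) e; omega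
    · intro x hx
      rw [mem_neighborFinset] at hx
      obtain ⟨j, hj, rfl⟩ := hclosed0 x hx
      have hj0 : j ≠ 0 := by
        rintro rfl
        exact H.irrefl hx
      refine ⟨j - 1, Finset.mem_filter.mpr ⟨Finset.mem_range.mpr (by omega), ?_⟩, by
        congr 1; omega⟩
      have h1 : j - 1 + 1 = j := by omega
      rw [h1]; exact hx
  have hTcard : T.card = H.degree (g p) := by
    rw [← card_neighborFinset_eq_degree]
    apply Finset.card_bij (fun j _ => g j)
    · intro j hj
      rw [mem_neighborFinset]
      exact (Finset.mem_filter.mp hj).2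
    · intro j hj k hk e
      have hj' := Finset.mem_range.mp (Finset.mem_filter.mp hj).1
      have hk' := Finset.mem_range.mp (Finset.mem_filter.mp hk).1
      exact ginj j k (by omega) (by omega) e
    · intro x hx
      rw [mem_neighborFinset] at hx
      obtain ⟨j, hj, rfl⟩ := hclosedp x hx
      have hjp : j ≠ p := by
        rintro rfl
        exact H.irrefl hx
      exact ⟨j, Finset.mem_filter.mpr ⟨Finset.mem_range.mpr (by omega), hx⟩, rfl⟩
  have hdeg0 : H.minDegree ≤ H.degree (g 0) := H.minDegree_le_degree _
  have hdegp : H.minDegree ≤ H.degree (g p) := H.minDegree_le_degree _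
  have hp2 : 2 ≤ p := by
    have hSsub : S ⊆ Finset.range p := Finset.filter_subset _ _
    have := Finset.card_le_card hSsub
    rw [hScard] at this
    simp [Finset.card_range] at this
    omega
  have hST : (S ∩ T).Nonempty := by
    have h1 := Finset.card_union_add_card_inter S T
    have h2 : (S ∪ T).card ≤ p := by
      have : S ∪ T ⊆ Finset.range p :=
        Finset.union_subset (Finset.filter_subset _ _) (Finset.filter_subset _ _)
      simpa using Finset.card_le_card this
    rw [← Finset.card_pos]
    omega
  obtain ⟨i, hi⟩ := hST
  obtain ⟨hiS, hiT⟩ := Finset.mem_inter.mp hi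
  have hilt : i < p := Finset.mem_range.mp (Finset.mem_filter.mp hiS).1
  have hadj0 : H.Adj (g 0) (g (i + 1)) := (Finset.mem_filter.mp hiS).2
  have hadjp : H.Adj (g p) (g i) := (Finset.mem_filter.mp hiT).2
  -- cyclic reordering
  set h : ℕ → W := fun j => if j ≤ i then g j else g (p + 1 + i - j) with hh
  have hval1 : ∀ j, j ≤ i → h j = g j := fun j hj => by simp [hh, hj]
  have hval2 : ∀ j, i < j → j ≤ p → h j = g (p + 1 + i - j) := fun j hj hj' => by
    simp [hh, show ¬ (j ≤ i) by omega]
  have hrange : ∀ x, (∃ j, j ≤ p ∧ g j = x) ↔ (∃ j, j ≤ p ∧ h j = x) := by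
    intro x
    constructor
    · rintro ⟨j, hj, rfl⟩
      by_cases hji : j ≤ i
      · exact ⟨j, hj, hval1 j hji⟩
      · refine ⟨p + 1 + i - j, by omega, ?_⟩
        rw [hval2 (p + 1 + i - j) (by omega) (by omega)]
        congr 1; omega
    · rintro ⟨j, hj, rfl⟩
      by_cases hji : j ≤ i
      · exact ⟨j, hj, (hval1 j hji).symm⟩
      · exact ⟨p + 1 + i - j, by omega, (hval2 j (by omega) hj).symm⟩
  have hinj' : ∀ j k, j ≤ p → k ≤ p → h j = h k → j = k := by
    intro j k hj hk e
    by_cases hji : j ≤ i <;> by_cases hki : k ≤ i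
    · rw [hval1 j hji, hval1 k hki] at e
      exact ginj j k (by omega) (by omega) e
    · rw [hval1 j hji, hval2 k (by omega) hk] at e
      have := ginj j (p + 1 + i - k) (by omega) (by omega) e; omega
    · rw [hval2 j (by omega) hj, hval1 k hki] at e
      have := ginj (p + 1 + i - j) k (by omega) (by omega) e; omega
    · rw [hval2 j (by omega) hj, hval2 k (by omega) hk] at e
      have := ginj (p + 1 + i - j) (p + 1 + i - k) (by omega) (by omega) e; omega
  have hadj' : ∀ j, j < p → H.Adj (h j) (h (j + 1)) := by
    intro j hj
    by_cases hj1 : j + 1 ≤ i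
    · rw [hval1 j (by omega), hval1 (j + 1) hj1]
      exact gadj j (by omega)
    · by_cases hj2 : j ≤ i
      · have hji : j = i := by omega
        rw [hval1 j hj2, hval2 (j + 1) (by omega) (by omega), hji]
        have h1 : p + 1 + i - (i + 1) = p := by omega
        rw [h1]
        exact hadjp.symm
      · rw [hval2 j (by omega) (by omega), hval2 (j + 1) (by omega) (by omega)]
        have h1 : p + 1 + i - j = (p + i - j) + 1 := by omega
        have h2 : p + 1 + i - (j + 1) = p + i - j := by omega
        rw [h1, h2]
        exact (gadj (p + i - j) (by omega)).symm
  have hwrap : H.Adj (h p) (h 0) := by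
    rw [hval2 p (by omega) (le_refl p), hval1 0 (by omega)]
    have h1 : p + 1 + i - p = i + 1 := by omega
    rw [h1]
    exact hadj0.symm
  by_cases hpm : p + 1 = m
  · refine ⟨h, ?_, ?_, ?_, ?_⟩
    · intro j k hj hk e
      exact hinj' j k (by omega) (by omega) e
    · intro j hj
      exact hadj' j (by omega)
    · have : m - 1 = p := by omega
      rw [this]
      exact hwrap
    · have hinjf : Function.Injective (fun j : Fin m => h j) := by
        rintro ⟨j, hj⟩ ⟨k, hk⟩ e
        exact Fin.ext (hinj' j k (by omega) (by omega) e)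
      have hbij := (Fintype.bijective_iff_injective_and_card (fun j : Fin m => h j)).mpr
        ⟨hinjf, by simp [hm']⟩
      intro w
      obtain ⟨⟨j, hj⟩, e⟩ := hbij.surjective w
      exact ⟨j, hj, e⟩
  · exfalso
    have hlt : p + 1 < m := by omega
    have hy : ∃ y : W, ∀ j, j ≤ p → y ≠ g j := by
      by_contra hcon
      push_neg at hcon
      have hsub : (Finset.univ : Finset W) ⊆ (Finset.range (p + 1)).image g := by
        intro y _
        obtain ⟨j, hj, e⟩ := hcon y
        exact Finset.mem_image.mpr ⟨j, Finset.mem_range.mpr (by omega), e.symm⟩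
      have h1 := Finset.card_le_card hsub
      have h2 := Finset.card_image_le (s := Finset.range (p + 1)) (f := g)
      simp [Finset.card_range] at h1 h2
      omega
    obtain ⟨y, hy⟩ := hy
    have hstep : ∀ s, H.Adj (h (s % (p + 1))) (h ((s + 1) % (p + 1))) := by
      intro s
      have hs : s % (p + 1) ≤ p := by
        have := Nat.mod_lt s (show 0 < p + 1 by omega); omega
      by_cases hsp : s % (p + 1) = p
      · have h1 : (s + 1) % (p + 1) = 0 := by
          rw [Nat.add_mod, hsp]
          simp
        rw [hsp, h1]
        exact hwrap
      · have h1 : (s + 1) % (p + 1) = s % (p + 1) + 1 := by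
          rw [Nat.add_mod, Nat.mod_eq_of_lt (show 1 < p + 1 by omega),
            Nat.mod_eq_of_lt (by omega)]
        rw [h1]
        exact hadj' _ (by omega)
    by_cases hyadj : ∃ z, z ≤ p ∧ H.Adj y (h z)
    · obtain ⟨z, hz, hyz⟩ := hyadj
      have hynoth : ∀ j, j ≤ p → y ≠ h j := by
        intro j hj e
        obtain ⟨j', hj', e'⟩ := (hrange (h j)).mpr ⟨j, hj, rfl⟩
        exact hy j' hj' (e.trans e'.symm)
      have hnew : A (p + 1) := by
        refine ⟨fun r => if r = 0 then y else h ((z + (r - 1)) % (p + 1)), ?_, ?_⟩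
        · intro j k hj hk e
          by_cases hj0 : j = 0 <;> by_cases hk0 : k = 0 <;> simp [hj0, hk0] at e ⊢
          · exact absurd e (hynoth _ (by have := Nat.mod_lt (z + (k - 1)) (show 0 < p + 1 by omega); omega))
          · exact absurd e.symm (hynoth _ (by have := Nat.mod_lt (z + (j - 1)) (show 0 < p + 1 by omega); omega))
          · have hm1 := Nat.mod_lt (z + (j - 1)) (show 0 < p + 1 by omega)
            have hm2 := Nat.mod_lt (z + (k - 1)) (show 0 < p + 1 by omega)
            have := hinj' _ _ (by omega) (by omega) e
            have := mod_shift_inj (show j - 1 < p + 1 by omega) (show k - 1 < p + 1 by omega) this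
            omega
        · intro j hj
          by_cases hj0 : j = 0
          · subst hj0
            simp only [if_pos rfl, if_neg (by omega : ¬ (1 = 0))]
            have h1 : (z + (1 - 1)) % (p + 1) = z := by
              simp [Nat.mod_eq_of_lt (by omega : z < p + 1)]
            rw [h1]
            exact hyz
          · simp only [if_neg hj0, if_neg (by omega : ¬ (j + 1 = 0))]
            have h1 : z + (j + 1 - 1) = z + (j - 1) + 1 := by omega
            rw [h1]
            exact hstep (z + (j - 1))
      have := hmax _ hnew; omega
    · push_neg at hyadj
      have hyg : ∀ j, j ≤ p → ¬ H.Adj y (g j) := by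
        intro j hj hadjy
        obtain ⟨j', hj', e'⟩ := (hrange (g j)).mp ⟨j, hj, rfl⟩
        exact hyadj j' hj' (e' ▸ hadjy)
      have hyne : y ≠ g 0 := hy 0 (by omega)
      have hnadj : ¬ H.Adj y (g 0) := hyg 0 (by omega)
      obtain ⟨c, hcy, hc0⟩ := common_neighbor H hd hyne hnadj
      have hcnot : ∀ j, j ≤ p → c ≠ g j := by
        intro j hj e
        exact hyg j hj (e ▸ hcy)
      have hcy' : c ≠ y := fun e => H.irrefl (e ▸ hcy)
      have hnew : A (p + 2) := by
        refine ⟨fun r => if r = 0 then y else if r = 1 then c else g (r - 2), ?_, ?_⟩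
        · intro j k hj hk e
          by_cases hj0 : j = 0 <;> by_cases hk0 : k = 0 <;>
            by_cases hj1 : j = 1 <;> by_cases hk1 : k = 1 <;>
            simp [hj0, hk0, hj1, hk1] at e ⊢ <;> first
          | (exact absurd e hcy'.symm)
          | (exact absurd e.symm hcy'.symm)
          | (exact absurd e (hy _ (by omega)))
          | (exact absurd e.symm (hy _ (by omega)))
          | (exact absurd e (hcnot _ (by omega)))
          | (exact absurd e.symm (hcnot _ (by omega)))
          | (have := ginj (j - 2) (k - 2) (by omega) (by omega) e; omega)
          | omega
        · intro j hj
          by_cases hj0 : j = 0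
          · subst hj0
            simpa using hcy
          · by_cases hj1 : j = 1
            · subst hj1
              simpa using hc0.symm
            · simp only [if_neg hj0, if_neg hj1, if_neg (by omega : ¬ (j + 1 = 0)),
                if_neg (by omega : ¬ (j + 1 = 1))]
              have h1 : j + 1 - 2 = (j - 2) + 1 := by omega
              rw [h1]
              exact gadj (j - 2) (by omega)
      have := hmax _ hnew; omega

/-- Let `G` be a graph of order `n ≥ 3` with minimum degree at least
`(n + 1)/2`. Then `G` is vertex pancyclic: every vertex lies on a cycle of length `k`
for every `3 ≤ k ≤ n`. -/
theorem vertex_pancyclic_of_min_degree {V : Type*} [Fintype V] (G : SimpleGraph V)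
    [DecidableRel G.Adj] (hn : 3 ≤ Fintype.card V)
    (hδ : ((Fintype.card V : ℚ) + 1) / 2 ≤ (G.minDegree : ℚ)) :
    ∀ v : V, ∀ k : ℕ, 3 ≤ k → k ≤ Fintype.card V →
      ∃ w : G.Walk v v, w.IsCycle ∧ w.length = k := by
  classical
  intro v k hk3 hkn
  have hδ' : Fintype.card V + 1 ≤ 2 * G.minDegree := by
    rw [div_le_iff₀ (by norm_num : (0:ℚ) < 2)] at hδ
    have : (Fintype.card V : ℚ) + 1 ≤ (G.minDegree : ℚ) * 2 := hδ
    have h2 : Fintype.card V + 1 ≤ G.minDegree * 2 := by exact_mod_cast this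
    omega
  haveI : Nonempty V := Fintype.card_pos_iff.mp (by omega)
  by_cases hn3 : Fintype.card V = 3
  · -- triangle case
    have hk : k = 3 := by omega
    subst hk
    have hmd : 2 ≤ G.minDegree := by omega
    have hdv : 2 ≤ G.degree v := le_trans hmd (G.minDegree_le_degree v)
    have h2lt : 1 < (G.neighborFinset v).card := by
      rw [card_neighborFinset_eq_degree]; omega
    obtain ⟨a, ha, b, hb, hab⟩ := Finset.one_lt_card.mp h2lt
    rw [mem_neighborFinset] at ha hb
    have hadjab : G.Adj a b := by
      have hda : 2 ≤ G.degree a := le_trans hmd (G.minDegree_le_degree a)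
      have hsub : G.neighborFinset a ⊆ Finset.univ.erase a := by
        intro x hx
        rw [mem_neighborFinset] at hx
        exact Finset.mem_erase.mpr ⟨hx.ne', Finset.mem_univ _⟩
      have hcard : (Finset.univ.erase a).card = 2 := by
        rw [Finset.card_erase_of_mem (Finset.mem_univ a)]
        simp [hn3]
      have heq : G.neighborFinset a = Finset.univ.erase a := by
        apply Finset.eq_of_subset_of_card_le hsub
        rw [hcard, card_neighborFinset_eq_degree]
        omega
      have hbmem : b ∈ G.neighborFinset a := by
        rw [heq]
        exact Finset.mem_erase.mpr ⟨hab.symm, Finset.mem_univ _⟩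
      rwa [mem_neighborFinset] at hbmem
    refine ⟨Walk.cons ha (Walk.cons hadjab (Walk.cons hb.symm Walk.nil)), ?_, by simp⟩
    rw [Walk.cons_isCycle_iff]
    constructor
    · rw [Walk.isPath_def]
      have h1 : a ≠ v := ha.ne'
      have h2 : b ≠ v := hb.ne'
      simp [hab, h1, h2]
    · intro hmem
      simp only [Walk.edges_cons, Walk.edges_nil, List.mem_cons, List.not_mem_nil,
        or_false] at hmem
      rcases hmem with hmem | hmem <;> rw [Sym2.eq_iff] at hmem <;>
        rcases hmem with ⟨e1, e2⟩ | ⟨e1, e2⟩ <;> subst_vars <;>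
        first
          | exact hab rfl
          | exact G.irrefl ha
          | exact G.irrefl hb
          | exact G.irrefl hadjab
  · -- main case : n ≥ 4
    have hn4 : 4 ≤ Fintype.card V := by omega
    set H : SimpleGraph {w : V // w ≠ v} := G.comap (fun w => (w : V)) with hH
    haveI : DecidableRel H.Adj := fun a b => Classical.dec _
    have hcardW : Fintype.card {w : V // w ≠ v} = Fintype.card V - 1 := by
      have h1 : Fintype.card {w : V // ¬ (w = v)} = Fintype.card V - Fintype.card {w : V // w = v} :=
        Fintype.card_subtype_compl _
      rw [Fintype.card_subtype_eq] at h1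
      exact h1
    haveI : Nonempty {w : V // w ≠ v} := by
      rw [← Fintype.card_pos_iff, hcardW]; omega
    have hdegH : ∀ w : {w : V // w ≠ v}, G.minDegree - 1 ≤ H.degree w := by
      intro w
      have hsub : ((G.neighborFinset ↑w).erase v).card ≤ H.degree w := by
        rw [← card_neighborFinset_eq_degree]
        apply Finset.card_le_card_of_injOn (fun x => if hx : x ≠ v then ⟨x, hx⟩ else w)
        · intro x hx
          have hx1 : x ≠ v := (Finset.mem_erase.mp hx).1
          have hx2 : G.Adj ↑w x := by
            have := (Finset.mem_erase.mp hx).2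
            rwa [mem_neighborFinset] at this
          simp only [dif_pos hx1]
          rw [Finset.mem_coe, mem_neighborFinset]
          exact hx2
        · intro x hx y hy e
          have hx1 : x ≠ v := (Finset.mem_erase.mp hx).1
          have hy1 : y ≠ v := (Finset.mem_erase.mp hy).1
          simp only [dif_pos hx1, dif_pos hy1] at e
          exact congrArg Subtype.val e
      have h1 : G.degree ↑w - 1 ≤ ((G.neighborFinset ↑w).erase v).card := by
        rw [← card_neighborFinset_eq_degree]
        exact Finset.pred_card_le_card_erase
      have h2 := G.minDegree_le_degree (↑w : V)
      omega
    have hminH : Fintype.card {w : V // w ≠ v} ≤ 2 * H.minDegree := by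
      have h1 := H.le_minDegree_of_forall_le_degree (G.minDegree - 1) hdegH
      rw [hcardW]
      omega
    obtain ⟨h, hinj, hadj, hwrap, hsurj⟩ := dirac_cycle H (by rw [hcardW]; omega) hminH
    set m := Fintype.card {w : V // w ≠ v} with hm'
    have hm4 : 3 ≤ m := by omega
    have hstep : ∀ s : ℕ, G.Adj ↑(h (s % m)) ↑(h ((s + 1) % m)) := by
      intro s
      have hs : s % m < m := Nat.mod_lt s (by omega)
      by_cases hc : s % m = m - 1
      · have h1 : (s + 1) % m = 0 := by
          rw [Nat.add_mod, hc, Nat.mod_eq_of_lt (show 1 < m by omega)]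
          have : (m - 1 + 1) = m := by omega
          simp [this]
        rw [hc, h1]
        exact hwrap
      · have h1 : (s + 1) % m = s % m + 1 := by
          rw [Nat.add_mod, Nat.mod_eq_of_lt (show 1 < m by omega), Nat.mod_eq_of_lt (by omega)]
        rw [h1]
        exact hadj _ (by omega)
    -- index sets of neighbours of v along the cycle
    set S : Finset ℕ := (Finset.range m).filter (fun j => G.Adj v ↑(h j)) with hS
    have hScard : S.card = G.degree v := by
      rw [← card_neighborFinset_eq_degree]
      apply Finset.card_bij (fun j _ => ((h j : {w : V // w ≠ v}) : V))
      · intro j hj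
        rw [mem_neighborFinset]
        exact (Finset.mem_filter.mp hj).2
      · intro j hj k hk e
        have hj' := Finset.mem_range.mp (Finset.mem_filter.mp hj).1
        have hk' := Finset.mem_range.mp (Finset.mem_filter.mp hk).1
        exact hinj j k hj' hk' (Subtype.coe_injective e)
      · intro x hx
        rw [mem_neighborFinset] at hx
        obtain ⟨j, hj, e⟩ := hsurj ⟨x, hx.ne'⟩
        refine ⟨j, Finset.mem_filter.mpr ⟨Finset.mem_range.mpr hj, ?_⟩, by rw [e]⟩
        rw [e]
        exact hx
    set l := k - 2 with hl'
    have hl1 : 1 ≤ l := by omega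
    have hlm : l ≤ m - 1 := by omega
    set S2 : Finset ℕ := S.image (fun j => (j + l) % m) with hS2
    have hS2card : S2.card = S.card := by
      apply Finset.card_image_of_injOn
      intro j1 h1 j2 h2 e
      have hj1 := Finset.mem_range.mp (Finset.mem_filter.mp h1).1
      have hj2 := Finset.mem_range.mp (Finset.mem_filter.mp h2).1
      have e2 : (l + j1) % m = (l + j2) % m := by
        rw [Nat.add_comm l j1, Nat.add_comm l j2]; exact e
      exact mod_shift_inj hj1 hj2 e2
    have hSS2 : (S ∩ S2).Nonempty := by
      have h1 := Finset.card_union_add_card_inter S S2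
      have h2 : (S ∪ S2).card ≤ m := by
        have hsub : S ∪ S2 ⊆ Finset.range m := by
          apply Finset.union_subset (Finset.filter_subset _ _)
          intro x hx
          obtain ⟨j, _, rfl⟩ := Finset.mem_image.mp hx
          exact Finset.mem_range.mpr (Nat.mod_lt _ (by omega))
        simpa using Finset.card_le_card hsub
      have h3 : G.minDegree ≤ G.degree v := G.minDegree_le_degree v
      have hmn : m = Fintype.card V - 1 := hcardW
      rw [← Finset.card_pos]
      omega
    obtain ⟨b, hbmem⟩ := hSS2
    obtain ⟨hbS, hbS2⟩ := Finset.mem_inter.mp hbmem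
    obtain ⟨a, haS, hab⟩ := Finset.mem_image.mp hbS2
    have halt : a < m := Finset.mem_range.mp (Finset.mem_filter.mp haS).1
    have hav : G.Adj v ↑(h a) := (Finset.mem_filter.mp haS).2
    have hbv : G.Adj v ↑(h ((a + l) % m)) := by
      rw [hab]; exact (Finset.mem_filter.mp hbS).2
    -- build the path along the cycle
    set f : ℕ → V := fun j => ↑(h (j % m)) with hf
    have hadjf : ∀ j, j < l → G.Adj (f (a + j)) (f (a + j + 1)) := fun j _ => hstep (a + j)
    obtain ⟨P, hPlen, hPsup⟩ := exists_walk_enum G f a l hadjf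
    have hfa : f a = ↑(h a) := by simp only [hf]; rw [Nat.mod_eq_of_lt halt]
    have hsupmem : ∀ x ∈ P.support, x ≠ v := by
      intro x hx
      rw [hPsup] at hx
      obtain ⟨j, _, rfl⟩ := List.mem_map.mp hx
      exact (h ((a + j) % m)).2
    have hPpath : P.IsPath := by
      rw [Walk.isPath_def, hPsup]
      refine List.Nodup.map_on ?_ List.nodup_range
      intro j1 h1 j2 h2 e
      rw [List.mem_range] at h1 h2
      have e' : h ((a + j1) % m) = h ((a + j2) % m) := Subtype.coe_injective e
      have e2 := hinj _ _ (Nat.mod_lt _ (by omega)) (Nat.mod_lt _ (by omega)) e'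
      exact mod_shift_inj (by omega) (by omega) e2
    have hend : G.Adj (f (a + l)) v := by
      have : f (a + l) = ↑(h ((a + l) % m)) := rfl
      rw [this]
      exact hbv.symm
    have hQpath : (P.concat hend).IsPath := by
      rw [Walk.isPath_def, Walk.support_concat]
      apply List.Nodup.append ((Walk.isPath_def P).mp hPpath) (List.nodup_singleton v)
      intro x hx hx2
      rw [List.mem_singleton] at hx2
      exact hsupmem x hx (hx2)
    have hvfa : G.Adj v (f a) := by rw [hfa]; exact hav
    refine ⟨Walk.cons hvfa (P.concat hend), ?_, ?_⟩
    · rw [Walk.cons_isCycle_iff]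
      refine ⟨hQpath, ?_⟩
      rw [Walk.edges_concat, List.concat_eq_append, List.mem_append]
      rintro (hmem | hmem)
      · exact hsupmem v (P.fst_mem_support_of_mem_edges hmem) rfl
      · rw [List.mem_singleton, Sym2.eq_iff] at hmem
        rcases hmem with ⟨e1, e2⟩ | ⟨e1, e2⟩
        · exact hsupmem (f a) P.start_mem_support e2
        · have e3 : h ((a + l) % m) = h (a % m) := by
            apply Subtype.coe_injective
            exact e2.symm
          have e4 := hinj _ _ (Nat.mod_lt _ (by omega)) (Nat.mod_lt _ (by omega)) e3
          have e5 : (a + l) % m = (a + 0) % m := by simpa using e4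
          have := mod_shift_inj (show l < m by omega) (show 0 < m by omega) e5
          omega
    · rw [Walk.length_cons, Walk.length_concat, hPlen]
      omega
end
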